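/- arXiv:1706.06456 — 3 statements merged into one kernel-verified Lean document; each statement's English description precedes it below -/
import Mathlib

section
/- Let T be a triangulation of a convex polygon π with n vertices. If some vertex of π is incident to exactly e interior edges of T, then for every triangulation U of π one has d(T,U) ≤ 2n − 6 − e. -/
/-!
Combinatorial model of a convex polygon with `n` vertices, labeled by `Fin n`
in clockwise cyclic order.
-/

/-- `c` lies strictly inside the clockwise arc going from `a` to `b`. -/
def Between (n : ℕ) (a c b : Fin n) : Prop :=
  0 < (c - a).val ∧ (c - a).val < (b - a).val

/-- Two edges on the polygon cross: their endpoints strictly interleave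
in the clockwise cyclic order. -/
def Cross (n : ℕ) (e f : Finset (Fin n)) : Prop :=
  ∃ a b c d : Fin n, e = {a, b} ∧ f = {c, d} ∧ Between n a c b ∧ Between n b d a

/-- The vertex immediately following `i` clockwise. -/
def nextV (n : ℕ) (i : Fin n) : Fin n :=
  ⟨(i.val + 1) % n, Nat.mod_lt _ i.pos⟩

/-- Boundary edges of the polygon: the pairs of cyclically consecutive vertices. -/
def IsBoundary (n : ℕ) (e : Finset (Fin n)) : Prop :=
  ∃ i : Fin n, e = {i, nextV n i}

/-- `E` is a triangulation of the convex (sub)polygon on the vertex set `W`: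
an inclusion-maximal set of pairwise non-crossing edges on `W`. -/
def IsTriangulationOn (n : ℕ) (W : Finset (Fin n)) (E : Finset (Finset (Fin n))) : Prop :=
  (∀ e ∈ E, e ⊆ W) ∧ (∀ e ∈ E, e.card = 2) ∧
    (∀ e ∈ E, ∀ f ∈ E, ¬ Cross n e f) ∧
    (∀ e : Finset (Fin n), e ⊆ W → e.card = 2 → (∀ f ∈ E, ¬ Cross n e f) → e ∈ E)

/-- A triangulation of the convex polygon with `n` vertices. -/
structure Triangulation (n : ℕ) where
  edges : Finset (Finset (Fin n))
  isTri : IsTriangulationOn n Finset.univ edges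

theorem Triangulation.edges_injective (n : ℕ) :
    Function.Injective (Triangulation.edges (n := n)) := by
  rintro ⟨e, he⟩ ⟨f, hf⟩ h
  dsimp at h
  subst h
  rfl

/-- The flip-graph of the polygon: two triangulations are adjacent exactly when
they differ by a single edge. -/
def flipGraph (n : ℕ) : SimpleGraph (Triangulation n) where
  Adj T U := T ≠ U ∧ (T.edges \ U.edges).card = 1 ∧ (U.edges \ T.edges).card = 1
  symm := ⟨fun T U h => ⟨h.1.symm, h.2.2, h.2.1⟩⟩
  loopless := ⟨fun T h => h.1 rfl⟩

noncomputable instance (n : ℕ) : Fintype (Triangulation n) :=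
  Fintype.ofInjective Triangulation.edges (Triangulation.edges_injective n)

open Classical in
/-- The number of interior edges of `T` incident to the vertex `v`. -/
noncomputable def interiorDeg (n : ℕ) (T : Triangulation n) (v : Fin n) : ℕ :=
  (T.edges.filter fun e => v ∈ e ∧ ¬ IsBoundary n e).card

/-- `T` has an ear in `v`: no interior edge of `T` is incident to `v`. -/
def HasEar (n : ℕ) (T : Triangulation n) (v : Fin n) : Prop :=
  ∀ e ∈ T.edges, ¬ IsBoundary n e → v ∉ e

/-- The eccentricity of `T` in the flip-graph: the maximum of `d(T,U)` over all
triangulations `U`. -/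
noncomputable def eccentricity (n : ℕ) (T : Triangulation n) : ℕ :=
  Finset.univ.sup fun U : Triangulation n => (flipGraph n).dist T U

/-- The monotone relabeling of the vertices of the polygon after the deletion of
the vertex `a`. -/
def collapse (n : ℕ) (a v : Fin (n + 2)) : Fin (n + 1) :=
  ⟨if v.val < a.val then v.val else v.val - 1, by
    have := v.isLt; have := a.isLt; split <;> omega⟩

/-- The edge set of the triangulation `T∖a` obtained by deleting the vertex `a` from a
triangulation with edge set `E`: remove the boundary edge `{a, a+1}`, replace `a` by
`a+1` in every remaining edge, and relabel the remaining vertices monotonically. -/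
def deleteEdges (n : ℕ) (a : Fin (n + 2)) (E : Finset (Finset (Fin (n + 2)))) :
    Finset (Finset (Fin (n + 1))) :=
  (E.erase {a, a + 1}).image fun e =>
    e.image fun v => collapse n a (if v = a then a + 1 else v)

/-- `c` is an apex of a triangle of `X` on the boundary edge `{a,b}`. -/
def ApexOf (n : ℕ) (X : Triangulation n) (a b c : Fin n) : Prop :=
  c ≠ a ∧ c ≠ b ∧ ({a, c} : Finset (Fin n)) ∈ X.edges ∧ ({b, c} : Finset (Fin n)) ∈ X.edges

/-- The flip between the adjacent triangulations `X` and `Y` is incident to `{a,b}`: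
it affects the triangle containing `{a,b}`. -/
def FlipIncident (n : ℕ) (X Y : Triangulation n) (a b : Fin n) : Prop :=
  ∃ c : Fin n, (ApexOf n X a b c ∧ ¬ ApexOf n Y a b c) ∨
    (ApexOf n Y a b c ∧ ¬ ApexOf n X a b c)

open Classical in
/-- The number of flips incident to `{a,b}` along the walk `p` in the flip-graph. -/
noncomputable def flipsIncident {n : ℕ} {T U : Triangulation n}
    (p : (flipGraph n).Walk T U) (a b : Fin n) : ℕ :=
  (p.darts.filter fun d => decide (FlipIncident n d.toProd.1 d.toProd.2 a b)).length

open Classical in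
/-- `a 0, …, a (k-1)` is a shelling of `T` at `v`: an ordering of the vertices not
joined to `v` by an edge of `T` such that, for every `i`, the edges of `T` incident
to none of `a i, …, a (k-1)` form a triangulation of a convex polygon. -/
def IsShelling (n k : ℕ) (T : Triangulation n) (v : Fin n) (a : Fin k → Fin n) : Prop :=
  Function.Injective a ∧
    (∀ w : Fin n, (∃ i, a i = w) ↔ w ≠ v ∧ ({v, w} : Finset (Fin n)) ∉ T.edges) ∧
    ∀ i : Fin k,
      IsTriangulationOn n (Finset.univ.filter fun w => ∀ j, i ≤ j → w ≠ a j)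
        (T.edges.filter fun e => ∀ j, i ≤ j → a j ∉ e)

/-- `a i` is incident to at least two interior edges of `U` whose other vertex is not
among `a i, …, a (k-1)`. -/
def GoodAt (n k : ℕ) (U : Triangulation n) (a : Fin k → Fin n) (i : Fin k) : Prop :=
  ∃ e₁ e₂ : Finset (Fin n), e₁ ∈ U.edges ∧ e₂ ∈ U.edges ∧ e₁ ≠ e₂ ∧
    ¬ IsBoundary n e₁ ∧ ¬ IsBoundary n e₂ ∧ a i ∈ e₁ ∧ a i ∈ e₂ ∧
    (∀ w ∈ e₁, w ≠ a i → ∀ j, i ≤ j → w ≠ a j) ∧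
    (∀ w ∈ e₂, w ≠ a i → ∀ j, i ≤ j → w ≠ a j)

/-- The set `Ω(T,v)`: triangulations `U` with an ear in `v` such that, for some
shelling `a` of `T` at `v`, every `a i` is incident to at least two interior edges of
`U` whose other vertex is not among `a i, …, a (k-1)`. -/
def Omega (n k : ℕ) (T : Triangulation n) (v : Fin n) : Set (Triangulation n) :=
  {U | HasEar n U v ∧ ∃ a : Fin k → Fin n, IsShelling n k T v a ∧ ∀ i, GoodAt n k U a i}

/-- The set `Ω̃(T,a,b)`: triangulations `U` such that every interior edge shared by `T`
and `U` is incident to `a` or to `b`, and every vertex on the left of `(a,b)` is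
incident to at least two interior edges of `U`. -/
def OmegaTilde (n : ℕ) (T : Triangulation n) (a b : Fin n) : Set (Triangulation n) :=
  {U | (∀ e ∈ T.edges, e ∈ U.edges → ¬ IsBoundary n e → a ∈ e ∨ b ∈ e) ∧
    ∀ c : Fin n, Between n a c b → 2 ≤ interiorDeg n U c}

/-- `(a,b,c)` is a clockwise-oriented central triangle of `T`: the oriented edges
`(a,b)`, `(b,c)` and `(c,a)` have length at most `n/2` and `{a,b}`, `{b,c}`, `{a,c}`
are edges of `T`. -/
def CentralTriangle (n : ℕ) (T : Triangulation n) (a b c : Fin n) : Prop :=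
  2 * (b - a).val ≤ n ∧ 2 * (c - b).val ≤ n ∧ 2 * (a - c).val ≤ n ∧
    ({a, b} : Finset (Fin n)) ∈ T.edges ∧ ({b, c} : Finset (Fin n)) ∈ T.edges ∧
    ({a, c} : Finset (Fin n)) ∈ T.edges

/-- cyclic difference of coordinates -/
def cd (n u w : ℕ) : ℕ := if w ≤ u then u - w else u + n - w

lemma fin_sub_val {n : ℕ} (p q : Fin n) :
    (p - q).val = if q.val ≤ p.val then p.val - q.val else p.val + n - q.val := by
  have hp := p.isLt; have hq := q.isLt
  have hd : (p - q).val = (n - q.val + p.val) % n := by rw [Fin.sub_def]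
  rcases le_or_gt q.val p.val with h | h
  · have e1 : n - q.val + p.val = n + (p.val - q.val) := by omega
    rw [if_pos h, hd, e1, Nat.add_mod_left]
    exact Nat.mod_eq_of_lt (by omega)
  · rw [if_neg (by omega), hd, Nat.mod_eq_of_lt (show n - q.val + p.val < n by omega)]
    omega

lemma cd_sub {n : ℕ} (hn : 0 < n) (o x y : Fin n) :
    (x - y).val = cd n (x - o).val (y - o).val := by
  haveI : NeZero n := ⟨by omega⟩
  rw [← sub_sub_sub_cancel_right x y o, fin_sub_val]
  rfl

lemma betw_iff {n : ℕ} (hn : 0 < n) (o a c b : Fin n) :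
    Between n a c b ↔ 0 < cd n (c - o).val (a - o).val ∧
      cd n (c - o).val (a - o).val < cd n (b - o).val (a - o).val := by
  unfold Between
  rw [cd_sub hn o c a, cd_sub hn o b a]

lemma coord_inj {n : ℕ} (hn : 0 < n) {o x y : Fin n} (h : (x - o).val = (y - o).val) : x = y := by
  haveI : NeZero n := ⟨by omega⟩
  have : x - o = y - o := Fin.ext h
  exact sub_left_injective this

lemma coord_zero {n : ℕ} (o : Fin n) : (o - o).val = 0 := by
  rw [fin_sub_val, if_pos le_rfl, Nat.sub_self]

lemma coord_lt {n : ℕ} (o x : Fin n) : (x - o).val < n := (x - o).isLt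

lemma nextV_eq {n : ℕ} [NeZero n] (i : Fin n) : nextV n i = i + 1 := by
  apply Fin.ext
  show (i.val + 1) % n = (i + 1).val
  rw [Fin.val_add, Fin.val_one', Nat.add_mod_mod]

lemma mem_pair {α : Type*} [DecidableEq α] {a b c : α} :
    a ∈ ({b, c} : Finset α) ↔ a = b ∨ a = c := by simp

lemma boundary_iff {n : ℕ} [NeZero n] (e : Finset (Fin n)) :
    IsBoundary n e ↔ ∃ i : Fin n, e = {i, i + 1} := by
  unfold IsBoundary
  constructor <;> rintro ⟨i, hi⟩ <;> refine ⟨i, ?_⟩ <;> rw [hi, nextV_eq]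

lemma succ_sub_val {n : ℕ} [NeZero n] (hn : 2 ≤ n) (i : Fin n) : (i + 1 - i).val = 1 := by
  have h : i + 1 - i = 1 := by abel
  have h1 : (1 : Fin n).val = 1 % n := rfl
  rw [h, h1, Nat.mod_eq_of_lt (by omega)]

lemma betw_ne {n : ℕ} {a c b : Fin n} (h : Between n a c b) : c ≠ a ∧ c ≠ b ∧ a ≠ b := by
  obtain ⟨h1, h2⟩ := h
  refine ⟨fun hca => ?_, fun hcb => ?_, fun hab => ?_⟩
  · rw [hca, coord_zero] at h1; omega
  · rw [hcb] at h2; omega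
  · rw [hab, coord_zero] at h2; omega

/-- Edges sharing a vertex do not cross. -/
lemma not_cross_shared {n : ℕ} {e f : Finset (Fin n)} {v : Fin n}
    (hve : v ∈ e) (hvf : v ∈ f) : ¬ Cross n e f := by
  rintro ⟨a, b, c, d, he, hf, h1, h2⟩
  subst he; subst hf
  obtain ⟨hca, hcb, -⟩ := betw_ne h1
  obtain ⟨hdb, hda, -⟩ := betw_ne h2
  rw [mem_pair] at hve hvf
  rcases hve with rfl | rfl <;> rcases hvf with h | h <;> simp_all

/-- A boundary edge crosses nothing (on the left). -/
lemma boundary_not_cross_left {n : ℕ} [NeZero n] (hn : 2 ≤ n) {e f : Finset (Fin n)}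
    (hb : IsBoundary n e) : ¬ Cross n e f := by
  rw [boundary_iff] at hb
  obtain ⟨i, rfl⟩ := hb
  rintro ⟨a, b, c, d, he, hf, h1, h2⟩
  have hab : a ≠ b := (betw_ne h1).2.2
  have hmem : a ∈ ({i, i+1} : Finset (Fin n)) ∧ b ∈ ({i, i+1} : Finset (Fin n)) := by
    constructor <;> rw [he] <;> simp [mem_pair]
  rw [mem_pair, mem_pair] at hmem
  obtain ⟨ha, hb'⟩ := hmem
  rcases ha with rfl | rfl
  · rcases hb' with rfl | rfl
    · exact hab rfl
    · have := succ_sub_val hn a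
      obtain ⟨g1, g2⟩ := h1; omega
  · rcases hb' with rfl | rfl
    · have := succ_sub_val hn b
      obtain ⟨g1, g2⟩ := h2; omega
    · exact hab rfl

lemma coord_ne {n : ℕ} (hn : 0 < n) {o x y : Fin n} (h : x ≠ y) :
    (x - o).val ≠ (y - o).val := fun hh => h (coord_inj hn hh)

/-- Trichotomy: a third point lies in one of the two open arcs. -/
lemma betw_total {n : ℕ} (hn : 0 < n) {a b v : Fin n}
    (hva : v ≠ a) (hvb : v ≠ b) (hab : a ≠ b) :
    Between n a v b ∨ Between n b v a := by
  rw [betw_iff hn a, betw_iff hn a]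
  have h1 := coord_ne hn hva (o := a)
  have h2 := coord_ne hn hvb (o := a)
  have h3 := coord_ne hn hab.symm (o := a)
  have l1 := coord_lt a v; have l2 := coord_lt a b; have l3 := coord_zero a
  unfold cd
  split_ifs <;> omega

/-- A boundary edge crosses nothing (on the right). -/
lemma boundary_not_cross_right {n : ℕ} [NeZero n] (hn : 2 ≤ n) {e f : Finset (Fin n)}
    (hb : IsBoundary n f) : ¬ Cross n e f := by
  rw [boundary_iff] at hb
  obtain ⟨i, rfl⟩ := hb
  rintro ⟨a, b, c, d, he, hf, h1, h2⟩
  have hn0 : 0 < n := by omega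
  have hcd : c ≠ d := by
    intro h; subst h
    rw [betw_iff hn0 a] at h1 h2
    have l1 := coord_lt a b; have l2 := coord_lt a c
    have l4 := coord_zero a
    unfold cd at h1 h2
    split_ifs at h1 h2 <;> omega
  have hc : c ∈ ({i, i+1} : Finset (Fin n)) ∧ d ∈ ({i, i+1} : Finset (Fin n)) := by
    constructor <;> rw [hf] <;> simp [mem_pair]
  rw [mem_pair, mem_pair] at hc
  have key : d = c + 1 ∨ c = d + 1 := by
    obtain ⟨hc1, hd1⟩ := hc
    rcases hc1 with rfl | rfl
    · rcases hd1 with rfl | rfl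
      · exact absurd rfl hcd
      · exact Or.inl rfl
    · rcases hd1 with rfl | rfl
      · exact Or.inr rfl
      · exact absurd rfl hcd
  -- now derive a contradiction by coordinates relative to a
  rw [betw_iff hn0 a] at h1 h2
  have l1 := coord_lt a b; have l2 := coord_lt a c; have l3 := coord_lt a d
  have l4 := coord_zero a
  rcases key with rfl | rfl
  · have hs : ((c + 1) - c).val = 1 := succ_sub_val hn c
    rw [cd_sub hn0 a (c+1) c] at hs
    have l5 := coord_lt a (c+1)
    unfold cd at h1 h2 hs
    split_ifs at h1 h2 hs <;> omega
  · have hs : ((d + 1) - d).val = 1 := succ_sub_val hn d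
    rw [cd_sub hn0 a (d+1) d] at hs
    have l5 := coord_lt a (d+1)
    unfold cd at h1 h2 hs
    split_ifs at h1 h2 hs <;> omega

lemma betw_asymm {n : ℕ} (hn : 0 < n) {a v b : Fin n}
    (h1 : Between n a v b) (h2 : Between n b v a) : False := by
  rw [betw_iff hn a] at h1 h2
  have l1 := coord_lt a b; have l2 := coord_lt a v; have l4 := coord_zero a
  unfold cd at h1 h2
  split_ifs at h1 h2 <;> omega

lemma pair_of_mem_card_two {α : Type*} [DecidableEq α] {e : Finset α} {v : α}
    (h2 : e.card = 2) (hv : v ∈ e) : ∃ w, w ≠ v ∧ e = {v, w} := by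
  obtain ⟨a, b, hab, rfl⟩ := Finset.card_eq_two.mp h2
  rw [mem_pair] at hv
  rcases hv with rfl | rfl
  · exact ⟨b, hab.symm, rfl⟩
  · exact ⟨a, hab, Finset.pair_comm a v⟩

noncomputable def fanE (n : ℕ) (v : Fin n) : Finset (Finset (Fin n)) := by
  classical exact Finset.univ.filter (fun e => e.card = 2 ∧ (v ∈ e ∨ IsBoundary n e))

lemma mem_fanE {n : ℕ} {v : Fin n} {e : Finset (Fin n)} :
    e ∈ fanE n v ↔ e.card = 2 ∧ (v ∈ e ∨ IsBoundary n e) := by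
  classical
  simp [fanE]

lemma fan_isTri {n : ℕ} (hn : 3 ≤ n) (v : Fin n) :
    IsTriangulationOn n Finset.univ (fanE n v) := by
  haveI : NeZero n := ⟨by omega⟩
  have hn0 : 0 < n := by omega
  have hn2 : 2 ≤ n := by omega
  refine ⟨fun e _ => e.subset_univ, fun e he => (mem_fanE.mp he).1, ?_, ?_⟩
  · intro e he f hf
    rcases (mem_fanE.mp he).2 with hv | hbd
    · rcases (mem_fanE.mp hf).2 with hv' | hbd'
      · exact not_cross_shared hv hv'
      · exact boundary_not_cross_right hn2 hbd'
    · exact boundary_not_cross_left hn2 hbd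
  · intro e _ hcard hnc
    rw [mem_fanE]
    refine ⟨hcard, ?_⟩
    by_contra hcon
    push_neg at hcon
    obtain ⟨hv, hbd⟩ := hcon
    obtain ⟨a, b, hab, hpr⟩ := Finset.card_eq_two.mp hcard
    have hva : v ≠ a := fun h => hv (by rw [hpr, mem_pair]; exact Or.inl h)
    have hvb : v ≠ b := fun h => hv (by rw [hpr, mem_pair]; exact Or.inr h)
    have key : ∀ a b : Fin n, e = {a, b} → Between n a v b → False := by
      intro a b heq hbetw
      -- a ≠ b, and e is not the boundary edge {b, b+1}, so (a - b).val ≥ 2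
      have hab' : a ≠ b := (betw_ne hbetw).2.2
      have h2ab : 2 ≤ (a - b).val := by
        rcases Nat.lt_or_ge (a - b).val 2 with h | h
        · exfalso
          have h0 : (a - b).val ≠ 0 := by
            have hx := coord_ne hn0 hab' (o := b)
            rw [coord_zero] at hx; exact hx
          have h1 : (a - b).val = 1 := by omega
          have : a = b + 1 := by
            apply coord_inj hn0 (o := b)
            rw [h1, succ_sub_val hn2 b]
          apply hbd
          rw [boundary_iff]
          exact ⟨b, by rw [heq, this, Finset.pair_comm]⟩
        · exact h
      have hw : Between n b (b + 1) a := by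
        constructor
        · rw [succ_sub_val hn2 b]; omega
        · rw [succ_sub_val hn2 b]; omega
      have hvw : v ≠ b + 1 := by
        intro h
        exact betw_asymm hn0 hbetw (h ▸ hw)
      have hfmem : ({v, b + 1} : Finset (Fin n)) ∈ fanE n v := by
        rw [mem_fanE]
        exact ⟨Finset.card_pair hvw, Or.inl (by rw [mem_pair]; exact Or.inl rfl)⟩
      exact hnc _ hfmem ⟨a, b, v, b + 1, heq, rfl, hbetw, hw⟩
    rcases betw_total hn0 hva hvb hab with h | h
    · exact key a b hpr h
    · exact key b a (hpr.trans (Finset.pair_comm a b)) h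

/-- Clean linear characterization of `Between` relative to a base point `o`. -/
lemma betw_iff_coords {n : ℕ} (hn : 0 < n) (o a c b : Fin n) :
    Between n a c b ↔
      (((a - o).val < (c - o).val ∧ (c - o).val < (b - o).val) ∨
       ((b - o).val < (a - o).val ∧
         ((a - o).val < (c - o).val ∨ (c - o).val < (b - o).val))) := by
  rw [betw_iff hn o]
  have l1 := coord_lt o a; have l2 := coord_lt o b; have l3 := coord_lt o c
  unfold cd
  split_ifs <;> omega

lemma pair_eq_cases {α : Type*} [DecidableEq α] {a b x y : α}
    (h : ({a, b} : Finset α) = {x, y}) (hab : a ≠ b) :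
    (a = x ∧ b = y) ∨ (a = y ∧ b = x) := by
  have hax : a ∈ ({x, y} : Finset α) := by rw [← h]; simp
  have hbx : b ∈ ({x, y} : Finset α) := by rw [← h]; simp
  have hxa : x ∈ ({a, b} : Finset α) := by rw [h]; simp
  have hya : y ∈ ({a, b} : Finset α) := by rw [h]; simp
  simp only [mem_pair] at hax hbx hxa hya
  rcases hax with rfl | rfl <;> rcases hbx with h1 | h1 <;> tauto

lemma tri_mem {n : ℕ} {E : Finset (Finset (Fin n))}
    (hT : IsTriangulationOn n Finset.univ E) {e : Finset (Fin n)}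
    (hcard : e.card = 2) (hnc : ∀ f ∈ E, ¬ Cross n e f) : e ∈ E :=
  hT.2.2.2 e (Finset.subset_univ e) hcard hnc

lemma boundary_mem {n : ℕ} (hn : 2 ≤ n) {E : Finset (Finset (Fin n))}
    (hT : IsTriangulationOn n Finset.univ E) {e : Finset (Fin n)}
    (hbd : IsBoundary n e) : e ∈ E := by
  haveI : NeZero n := ⟨by omega⟩
  refine tri_mem hT ?_ (fun f _ => boundary_not_cross_left hn hbd)
  rw [boundary_iff] at hbd
  obtain ⟨i, rfl⟩ := hbd
  refine Finset.card_pair (fun h => ?_)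
  have h1 := succ_sub_val hn i
  rw [← h, coord_zero] at h1
  omega

/-- Apex lemma: an edge `{a,b}` of a triangulation with a nonempty open arc from
`a` to `b` has an apex in that arc. -/
lemma apex_exists {n : ℕ} (hn : 3 ≤ n) {E : Finset (Finset (Fin n))}
    (hT : IsTriangulationOn n Finset.univ E) {a b : Fin n}
    (hab : ({a, b} : Finset (Fin n)) ∈ E) (h2 : 2 ≤ (b - a).val) :
    ∃ c, Between n a c b ∧ ({a, c} : Finset (Fin n)) ∈ E ∧
      ({c, b} : Finset (Fin n)) ∈ E := by
  classical
  haveI : NeZero n := ⟨by omega⟩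
  have hn0 : 0 < n := by omega
  have hn2 : 2 ≤ n := by omega
  have hA := coord_zero a
  have hB := coord_lt a b
  -- the set of candidate apexes joined to `a`
  set S : Finset (Fin n) :=
    Finset.univ.filter (fun c => Between n a c b ∧ ({a, c} : Finset (Fin n)) ∈ E) with hS
  have hSne : S.Nonempty := by
    refine ⟨a + 1, ?_⟩
    rw [hS, Finset.mem_filter]
    refine ⟨Finset.mem_univ _, ?_, ?_⟩
    · rw [betw_iff_coords hn0 a]
      rw [succ_sub_val hn2 a]
      omega
    · exact boundary_mem hn2 hT (by rw [boundary_iff]; exact ⟨a, rfl⟩)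
  obtain ⟨c, hcS, hmax⟩ := S.exists_max_image (fun x => (x - a).val) hSne
  rw [hS, Finset.mem_filter] at hcS
  obtain ⟨-, hcbetw, hacE⟩ := hcS
  have hC0 : 0 < (c - a).val ∧ (c - a).val < (b - a).val := by
    rw [betw_iff_coords hn0 a] at hcbetw; omega
  refine ⟨c, hcbetw, hacE, ?_⟩
  apply tri_mem hT (Finset.card_pair (betw_ne hcbetw).2.1)
  intro f hf hcross
  obtain ⟨p, q, r, s, hpq, hfrs, hb1, hb2⟩ := hcross
  have hmax' : ∀ x : Fin n, Between n a x b → ({a, x} : Finset (Fin n)) ∈ E →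
      (x - a).val ≤ (c - a).val := by
    intro x h1 h2
    exact hmax x (by rw [hS, Finset.mem_filter]; exact ⟨Finset.mem_univ _, h1, h2⟩)
  have hR := coord_lt a r
  have hSc := coord_lt a s
  rcases pair_eq_cases hpq (betw_ne hcbetw).2.1 with ⟨rfl, rfl⟩ | ⟨rfl, rfl⟩
  · -- p = c, q = b : Between c r b, Between b s c
    have hr : (c - a).val < (r - a).val ∧ (r - a).val < (b - a).val := by
      rw [betw_iff_coords hn0 a] at hb1; omega
    rcases eq_or_ne s a with hsa | hsa
    · have hfE : ({a, r} : Finset (Fin n)) ∈ E := by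
        rwa [hfrs, hsa, Finset.pair_comm r a] at hf
      have : (r - a).val ≤ (c - a).val := by
        refine hmax' r ?_ hfE
        rw [betw_iff_coords hn0 a]; omega
      omega
    · have hSne0 : (s - a).val ≠ 0 := by
        have hx := coord_ne hn0 hsa (o := a); rwa [hA] at hx
      have hs : (b - a).val < (s - a).val ∨ (s - a).val < (c - a).val := by
        rw [betw_iff_coords hn0 a] at hb2; omega
      rcases hs with hs | hs
      · -- f crosses {a, b}
        refine hT.2.2.1 _ hab _ hf ⟨a, b, r, s, rfl, hfrs, ?_, ?_⟩ <;>
          rw [betw_iff_coords hn0 a] <;> omega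
      · -- f crosses {a, c}
        refine hT.2.2.1 _ hacE _ hf ⟨a, c, s, r, rfl, hfrs.trans (Finset.pair_comm r s), ?_, ?_⟩ <;>
          rw [betw_iff_coords hn0 a] <;> omega
  · -- p = b, q = c : Between b r c, Between c s b
    have hs : (c - a).val < (s - a).val ∧ (s - a).val < (b - a).val := by
      rw [betw_iff_coords hn0 a] at hb2; omega
    rcases eq_or_ne r a with hra | hra
    · have hfE : ({a, s} : Finset (Fin n)) ∈ E := by
        rwa [hfrs, hra] at hf
      have : (s - a).val ≤ (c - a).val := by
        refine hmax' s ?_ hfE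
        rw [betw_iff_coords hn0 a]; omega
      omega
    · have hRne0 : (r - a).val ≠ 0 := by
        have hx := coord_ne hn0 hra (o := a); rwa [hA] at hx
      have hr : (b - a).val < (r - a).val ∨ (r - a).val < (c - a).val := by
        rw [betw_iff_coords hn0 a] at hb1; omega
      rcases hr with hr | hr
      · -- f crosses {a, b}
        refine hT.2.2.1 _ hab _ hf ⟨a, b, s, r, rfl, hfrs.trans (Finset.pair_comm r s), ?_, ?_⟩ <;>
          rw [betw_iff_coords hn0 a] <;> omega
      · -- f crosses {a, c}
        refine hT.2.2.1 _ hacE _ hf ⟨a, c, r, s, rfl, hfrs, ?_, ?_⟩ <;>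
          rw [betw_iff_coords hn0 a] <;> omega

lemma cross_symm {n : ℕ} (hn : 0 < n) {e f : Finset (Fin n)} (h : Cross n e f) :
    Cross n f e := by
  obtain ⟨a, b, c, d, he, hf, h1, h2⟩ := h
  have hA := coord_zero a
  have lb := coord_lt a b; have lc := coord_lt a c; have ld := coord_lt a d
  rw [betw_iff_coords hn a] at h1 h2
  exact ⟨c, d, b, a, hf, he.trans (Finset.pair_comm a b),
    by rw [betw_iff_coords hn a]; omega,
    by rw [betw_iff_coords hn a]; omega⟩

lemma ne_of_pair_mem_tri {n : ℕ} {E : Finset (Finset (Fin n))}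
    (hT : IsTriangulationOn n Finset.univ E) {v w : Fin n}
    (h : ({v, w} : Finset (Fin n)) ∈ E) : v ≠ w := by
  intro hvw
  have := hT.2.1 _ h
  rw [← hvw] at this
  simp at this

open Classical in
/-- The flip step: from a triangulation having a non-neighbor of `v`, move to an
adjacent triangulation with one more neighbor of `v`. -/
lemma flip_step {n : ℕ} (hn : 3 ≤ n) (T : Triangulation n) (v w0 : Fin n)
    (hw0v : w0 ≠ v) (hw0 : ({v, w0} : Finset (Fin n)) ∉ T.edges) :
    ∃ (T' : Triangulation n) (u : Fin n), (flipGraph n).Adj T T' ∧ u ≠ v ∧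
      ({v, u} : Finset (Fin n)) ∉ T.edges ∧ ({v, u} : Finset (Fin n)) ∈ T'.edges ∧
      ∀ w : Fin n, w ≠ u →
        (({v, w} : Finset (Fin n)) ∈ T'.edges ↔ ({v, w} : Finset (Fin n)) ∈ T.edges) := by
  haveI : NeZero n := ⟨by omega⟩
  have hn0 : 0 < n := by omega
  have hn2 : 2 ≤ n := by omega
  have hT := T.isTri
  have hV : (v - v).val = 0 := coord_zero v
  -- v+1 and v-1 are neighbors of v
  have hp1 : ({v, v + 1} : Finset (Fin n)) ∈ T.edges :=
    boundary_mem hn2 hT (by rw [boundary_iff]; exact ⟨v, rfl⟩)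
  have hm1 : ({v, v - 1} : Finset (Fin n)) ∈ T.edges := by
    have h1 : (v - 1) + 1 = v := by abel
    refine boundary_mem hn2 hT ?_
    rw [boundary_iff]
    exact ⟨v - 1, by rw [h1, Finset.pair_comm]⟩
  have hp1c : ((v + 1) - v).val = 1 := succ_sub_val hn2 v
  have hm1c : ((v - 1) - v).val = n - 1 := by
    have h1 : (v - 1) + 1 = v := by abel
    have h2 := succ_sub_val hn2 (v - 1)
    rw [h1] at h2
    have h3 := coord_lt v (v - 1)
    have h4 : (v - 1) ≠ v := by
      intro h
      rw [h, coord_zero] at h2; omega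
    have h5 := coord_ne hn0 h4 (o := v)
    rw [hV] at h5
    -- (v - (v-1)).val = cd n 0 ((v-1)-v).val
    rw [cd_sub hn0 v v (v - 1), hV] at h2
    unfold cd at h2
    split_ifs at h2 <;> omega
  -- coordinates of w0
  have hW0lt := coord_lt v w0
  have hW0ne : (w0 - v).val ≠ 0 := by
    have h := coord_ne hn0 hw0v (o := v); rwa [hV] at h
  have hW0ne1 : (w0 - v).val ≠ 1 := by
    intro h
    exact hw0 (by rw [coord_inj hn0 (o := v) (h.trans hp1c.symm)]; exact hp1)
  have hW0nem : (w0 - v).val ≠ n - 1 := by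
    intro h
    exact hw0 (by rw [coord_inj hn0 (o := v) (h.trans hm1c.symm)]; exact hm1)
  -- choose w1 : the neighbor just before w0, and w2 : the neighbor just after w0
  set S1 : Finset (Fin n) := Finset.univ.filter
    (fun x => ({v, x} : Finset (Fin n)) ∈ T.edges ∧ (x - v).val < (w0 - v).val) with hS1
  set S2 : Finset (Fin n) := Finset.univ.filter
    (fun x => ({v, x} : Finset (Fin n)) ∈ T.edges ∧ (w0 - v).val < (x - v).val) with hS2
  have hS1ne : S1.Nonempty := ⟨v + 1, by
    rw [hS1, Finset.mem_filter]; exact ⟨Finset.mem_univ _, hp1, by omega⟩⟩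
  have hS2ne : S2.Nonempty := ⟨v - 1, by
    rw [hS2, Finset.mem_filter]; exact ⟨Finset.mem_univ _, hm1, by omega⟩⟩
  obtain ⟨w1, hw1S, hmax1⟩ := S1.exists_max_image (fun x => (x - v).val) hS1ne
  obtain ⟨w2, hw2S, hmin2⟩ := S2.exists_min_image (fun x => (x - v).val) hS2ne
  rw [hS1, Finset.mem_filter] at hw1S
  rw [hS2, Finset.mem_filter] at hw2S
  obtain ⟨-, hw1E, hW1lt⟩ := hw1S
  obtain ⟨-, hw2E, hW2gt⟩ := hw2S
  have hW1pos : 0 < (w1 - v).val := by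
    have h := coord_ne hn0 (ne_of_pair_mem_tri hT hw1E).symm (o := v)
    rw [hV] at h; omega
  have hW2lt : (w2 - v).val < n := coord_lt v w2
  -- gap property: no neighbor has coordinate strictly between w1 and w2
  have hgap : ∀ x : Fin n, ({v, x} : Finset (Fin n)) ∈ T.edges →
      (x - v).val ≤ (w1 - v).val ∨ (w2 - v).val ≤ (x - v).val := by
    intro x hx
    have hxw0 : (x - v).val ≠ (w0 - v).val := by
      intro h
      exact hw0 (by rw [← coord_inj hn0 (o := v) h]; exact hx)
    rcases Nat.lt_or_ge (x - v).val (w0 - v).val with h | h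
    · exact Or.inl (hmax1 x (by rw [hS1, Finset.mem_filter]; exact ⟨Finset.mem_univ _, hx, h⟩))
    · exact Or.inr (hmin2 x (by rw [hS2, Finset.mem_filter]; exact ⟨Finset.mem_univ _, hx, by omega⟩))
  -- {w1, w2} is an edge of T
  have hw1w2 : (w1 - v).val < (w2 - v).val := by omega
  have hw1w2ne : w1 ≠ w2 := fun h => by
    rw [h] at hw1w2; omega
  have h12 : ({w1, w2} : Finset (Fin n)) ∈ T.edges := by
    apply tri_mem hT (Finset.card_pair hw1w2ne)
    intro f hf hcross
    obtain ⟨p, q, r, s, hpq, hfrs, hb1, hb2⟩ := hcross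
    have hR := coord_lt v r; have hS := coord_lt v s
    rcases pair_eq_cases hpq hw1w2ne with ⟨rfl, rfl⟩ | ⟨rfl, rfl⟩
    · -- Between w1 r w2, Between w2 s w1
      have hr : (w1 - v).val < (r - v).val ∧ (r - v).val < (w2 - v).val := by
        rw [betw_iff_coords hn0 v] at hb1; omega
      have hs : (s - v).val < (w1 - v).val ∨ (w2 - v).val < (s - v).val := by
        rw [betw_iff_coords hn0 v] at hb2; omega
      rcases eq_or_ne (s - v).val 0 with hs0 | hs0
      · -- s = v : r would be a neighbor in the gap
        have hsv : s = v := coord_inj hn0 (o := v) (by rw [hs0, hV])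
        have : ({v, r} : Finset (Fin n)) ∈ T.edges := by
          rw [hfrs, hsv, Finset.pair_comm r v] at hf; exact hf
        rcases hgap r this <;> omega
      · rcases hs with hs | hs
        · -- f crosses {v, w1}
          exact hT.2.2.1 _ hw1E _ hf ⟨v, w1, s, r, rfl, hfrs.trans (Finset.pair_comm r s),
            by rw [betw_iff_coords hn0 v]; omega, by rw [betw_iff_coords hn0 v]; omega⟩
        · -- f crosses {v, w2}
          exact hT.2.2.1 _ hw2E _ hf ⟨v, w2, r, s, rfl, hfrs,
            by rw [betw_iff_coords hn0 v]; omega, by rw [betw_iff_coords hn0 v]; omega⟩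
    · -- Between w2 r w1, Between w1 s w2
      have hs : (w1 - v).val < (s - v).val ∧ (s - v).val < (w2 - v).val := by
        rw [betw_iff_coords hn0 v] at hb2; omega
      have hr : (r - v).val < (w1 - v).val ∨ (w2 - v).val < (r - v).val := by
        rw [betw_iff_coords hn0 v] at hb1; omega
      rcases eq_or_ne (r - v).val 0 with hr0 | hr0
      · have hrv : r = v := coord_inj hn0 (o := v) (by rw [hr0, hV])
        have : ({v, s} : Finset (Fin n)) ∈ T.edges := by
          rw [hfrs, hrv] at hf; exact hf
        rcases hgap s this <;> omega
      · rcases hr with hr | hr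
        · -- f crosses {v, w1}
          exact hT.2.2.1 _ hw1E _ hf ⟨v, w1, r, s, rfl, hfrs,
            by rw [betw_iff_coords hn0 v]; omega, by rw [betw_iff_coords hn0 v]; omega⟩
        · -- f crosses {v, w2}
          exact hT.2.2.1 _ hw2E _ hf ⟨v, w2, s, r, rfl,
            hfrs.trans (Finset.pair_comm r s),
            by rw [betw_iff_coords hn0 v]; omega, by rw [betw_iff_coords hn0 v]; omega⟩
  -- the apex on the far side of {w1, w2}
  have h2arc : 2 ≤ (w2 - w1).val := by
    rw [cd_sub hn0 v w2 w1]; unfold cd; split_ifs <;> omega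
  obtain ⟨u, hubetw, h1u, hu2⟩ := apex_exists hn hT h12 h2arc
  have hU : (w1 - v).val < (u - v).val ∧ (u - v).val < (w2 - v).val := by
    rw [betw_iff_coords hn0 v] at hubetw; omega
  have hUlt := coord_lt v u
  have huv : u ≠ v := by
    intro h; rw [h, hV] at hU; omega
  have huT : ({v, u} : Finset (Fin n)) ∉ T.edges := by
    intro h; rcases hgap u h with h' | h' <;> omega
  have hvne1 : v ≠ w1 := by
    intro h; rw [← h, hV] at hW1pos; omega
  have hvne2 : v ≠ w2 := by
    intro h; rw [← h, hV] at hW2gt; omega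
  have hune1 : u ≠ w1 := by
    intro h; rw [h] at hU; omega
  have hune2 : u ≠ w2 := by
    intro h; rw [h] at hU; omega
  have hvuw12 : ({v, u} : Finset (Fin n)) ≠ {w1, w2} := by
    intro h
    have hx : v ∈ ({w1, w2} : Finset (Fin n)) := by rw [← h]; simp
    rw [mem_pair] at hx
    rcases hx with hx | hx
    · exact hvne1 hx
    · exact hvne2 hx
  set E' : Finset (Finset (Fin n)) := insert {v, u} (T.edges.erase {w1, w2}) with hE'
  have hm_vw1 : ({v, w1} : Finset (Fin n)) ∈ E' := by
    rw [hE']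
    refine Finset.mem_insert_of_mem (Finset.mem_erase.mpr ⟨?_, hw1E⟩)
    intro h
    have hx : v ∈ ({w1, w2} : Finset (Fin n)) := by rw [← h]; simp
    rw [mem_pair] at hx
    rcases hx with hx | hx
    · exact hvne1 hx
    · exact hvne2 hx
  have hm_vw2 : ({v, w2} : Finset (Fin n)) ∈ E' := by
    rw [hE']
    refine Finset.mem_insert_of_mem (Finset.mem_erase.mpr ⟨?_, hw2E⟩)
    intro h
    have hx : v ∈ ({w1, w2} : Finset (Fin n)) := by rw [← h]; simp
    rw [mem_pair] at hx
    rcases hx with hx | hx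
    · exact hvne1 hx
    · exact hvne2 hx
  have hm_w1u : ({w1, u} : Finset (Fin n)) ∈ E' := by
    rw [hE']
    refine Finset.mem_insert_of_mem (Finset.mem_erase.mpr ⟨?_, h1u⟩)
    intro h
    have hx : u ∈ ({w1, w2} : Finset (Fin n)) := by rw [← h]; simp
    rw [mem_pair] at hx
    rcases hx with hx | hx
    · exact hune1 hx
    · exact hune2 hx
  have hm_uw2 : ({u, w2} : Finset (Fin n)) ∈ E' := by
    rw [hE']
    refine Finset.mem_insert_of_mem (Finset.mem_erase.mpr ⟨?_, hu2⟩)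
    intro h
    have hx : u ∈ ({w1, w2} : Finset (Fin n)) := by rw [← h]; simp
    rw [mem_pair] at hx
    rcases hx with hx | hx
    · exact hune1 hx
    · exact hune2 hx
  -- key: the only edge of T crossing {v, u} is {w1, w2}
  have hkey : ∀ f ∈ T.edges, Cross n ({v, u} : Finset (Fin n)) f → f = {w1, w2} := by
    intro f hf hcr
    obtain ⟨p, q, r, s, hpq, hfrs, hb1, hb2⟩ := hcr
    have hR := coord_lt v r; have hS := coord_lt v s
    rcases pair_eq_cases hpq huv.symm with ⟨rfl, rfl⟩ | ⟨rfl, rfl⟩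
    · -- Between v r u, Between u s v
      have hr : 0 < (r - v).val ∧ (r - v).val < (u - v).val := by
        rw [betw_iff_coords hn0 v] at hb1; omega
      have hs : (u - v).val < (s - v).val := by
        rw [betw_iff_coords hn0 v] at hb2; omega
      rcases Nat.lt_trichotomy (r - v).val (w1 - v).val with h | h | h
      · exact absurd ⟨v, w1, r, s, rfl, hfrs, by rw [betw_iff_coords hn0 v]; omega,
          by rw [betw_iff_coords hn0 v]; omega⟩ (hT.2.2.1 _ hw1E _ hf)
      · have hrw1 : r = w1 := coord_inj hn0 (o := v) h
        rcases Nat.lt_trichotomy (s - v).val (w2 - v).val with h' | h' | h'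
        · exact absurd ⟨u, w2, s, w1, rfl,
            by rw [hfrs, hrw1]; exact Finset.pair_comm w1 s,
            by rw [betw_iff_coords hn0 v]; omega, by rw [betw_iff_coords hn0 v]; omega⟩
            (hT.2.2.1 _ hu2 _ hf)
        · have hsw2 : s = w2 := coord_inj hn0 (o := v) h'
          rw [hfrs, hrw1, hsw2]
        · exact absurd ⟨v, w2, w1, s, rfl, by rw [hfrs, hrw1],
            by rw [betw_iff_coords hn0 v]; omega, by rw [betw_iff_coords hn0 v]; omega⟩
            (hT.2.2.1 _ hw2E _ hf)
      · exact absurd ⟨w1, u, r, s, rfl, hfrs, by rw [betw_iff_coords hn0 v]; omega,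
          by rw [betw_iff_coords hn0 v]; omega⟩ (hT.2.2.1 _ h1u _ hf)
    · -- Between u r v, Between v s u
      have hr : (u - v).val < (r - v).val := by
        rw [betw_iff_coords hn0 v] at hb1; omega
      have hs : 0 < (s - v).val ∧ (s - v).val < (u - v).val := by
        rw [betw_iff_coords hn0 v] at hb2; omega
      rcases Nat.lt_trichotomy (s - v).val (w1 - v).val with h | h | h
      · exact absurd ⟨v, w1, s, r, rfl, hfrs.trans (Finset.pair_comm r s),
          by rw [betw_iff_coords hn0 v]; omega, by rw [betw_iff_coords hn0 v]; omega⟩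
          (hT.2.2.1 _ hw1E _ hf)
      · have hsw1 : s = w1 := coord_inj hn0 (o := v) h
        rcases Nat.lt_trichotomy (r - v).val (w2 - v).val with h' | h' | h'
        · exact absurd ⟨u, w2, r, w1, rfl, by rw [hfrs, hsw1],
            by rw [betw_iff_coords hn0 v]; omega, by rw [betw_iff_coords hn0 v]; omega⟩
            (hT.2.2.1 _ hu2 _ hf)
        · have hrw2 : r = w2 := coord_inj hn0 (o := v) h'
          rw [hfrs, hrw2, hsw1]; exact Finset.pair_comm w2 w1
        · exact absurd ⟨v, w2, w1, r, rfl,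
            by rw [hfrs, hsw1]; exact Finset.pair_comm r w1,
            by rw [betw_iff_coords hn0 v]; omega, by rw [betw_iff_coords hn0 v]; omega⟩
            (hT.2.2.1 _ hw2E _ hf)
      · exact absurd ⟨w1, u, s, r, rfl, hfrs.trans (Finset.pair_comm r s),
          by rw [betw_iff_coords hn0 v]; omega, by rw [betw_iff_coords hn0 v]; omega⟩
          (hT.2.2.1 _ h1u _ hf)
  -- key2: a candidate crossing {w1, w2} but nothing in E' must be {v, u}
  have hkey2 : ∀ g : Finset (Fin n), (∀ f ∈ E', ¬ Cross n g f) →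
      Cross n ({w1, w2} : Finset (Fin n)) g → g = {v, u} := by
    intro g hnc hcr
    obtain ⟨p, q, r, s, hpq, hgrs, hb1, hb2⟩ := hcr
    have hR := coord_lt v r; have hS := coord_lt v s
    rcases pair_eq_cases hpq hw1w2ne with ⟨rfl, rfl⟩ | ⟨rfl, rfl⟩
    · -- Between w1 r w2, Between w2 s w1
      have hr : (w1 - v).val < (r - v).val ∧ (r - v).val < (w2 - v).val := by
        rw [betw_iff_coords hn0 v] at hb1; omega
      have hs : (s - v).val < (w1 - v).val ∨ (w2 - v).val < (s - v).val := by
        rw [betw_iff_coords hn0 v] at hb2; omega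
      rcases eq_or_ne (s - v).val 0 with hs0 | hs0
      · have hsv : s = v := coord_inj hn0 (o := v) (by rw [hs0, hV])
        rcases Nat.lt_trichotomy (r - v).val (u - v).val with h | h | h
        · exact absurd ⟨v, r, w1, u, by rw [hgrs, hsv]; exact Finset.pair_comm r v, rfl,
            by rw [betw_iff_coords hn0 v]; omega, by rw [betw_iff_coords hn0 v]; omega⟩
            (hnc _ hm_w1u)
        · have hru : r = u := coord_inj hn0 (o := v) h
          rw [hgrs, hru, hsv]; exact Finset.pair_comm u v
        · exact absurd ⟨r, v, w2, u, by rw [hgrs, hsv], Finset.pair_comm u w2,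
            by rw [betw_iff_coords hn0 v]; omega, by rw [betw_iff_coords hn0 v]; omega⟩
            (hnc _ hm_uw2)
      · rcases hs with hs | hs
        · exact absurd ⟨r, s, v, w1, hgrs, rfl,
            by rw [betw_iff_coords hn0 v]; omega, by rw [betw_iff_coords hn0 v]; omega⟩
            (hnc _ hm_vw1)
        · exact absurd ⟨r, s, w2, v, hgrs, Finset.pair_comm v w2,
            by rw [betw_iff_coords hn0 v]; omega, by rw [betw_iff_coords hn0 v]; omega⟩
            (hnc _ hm_vw2)
    · -- Between w2 r w1, Between w1 s w2
      have hs : (w1 - v).val < (s - v).val ∧ (s - v).val < (w2 - v).val := by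
        rw [betw_iff_coords hn0 v] at hb2; omega
      have hr : (r - v).val < (w1 - v).val ∨ (w2 - v).val < (r - v).val := by
        rw [betw_iff_coords hn0 v] at hb1; omega
      rcases eq_or_ne (r - v).val 0 with hr0 | hr0
      · have hrv : r = v := coord_inj hn0 (o := v) (by rw [hr0, hV])
        rcases Nat.lt_trichotomy (s - v).val (u - v).val with h | h | h
        · exact absurd ⟨v, s, w1, u, by rw [hgrs, hrv], rfl,
            by rw [betw_iff_coords hn0 v]; omega, by rw [betw_iff_coords hn0 v]; omega⟩
            (hnc _ hm_w1u)
        · have hsu : s = u := coord_inj hn0 (o := v) h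
          rw [hgrs, hrv, hsu]
        · exact absurd ⟨s, v, w2, u, by rw [hgrs, hrv]; exact Finset.pair_comm v s,
            Finset.pair_comm u w2,
            by rw [betw_iff_coords hn0 v]; omega, by rw [betw_iff_coords hn0 v]; omega⟩
            (hnc _ hm_uw2)
      · rcases hr with hr | hr
        · exact absurd ⟨s, r, v, w1, hgrs.trans (Finset.pair_comm r s), rfl,
            by rw [betw_iff_coords hn0 v]; omega, by rw [betw_iff_coords hn0 v]; omega⟩
            (hnc _ hm_vw1)
        · exact absurd ⟨s, r, w2, v, hgrs.trans (Finset.pair_comm r s), Finset.pair_comm v w2,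
            by rw [betw_iff_coords hn0 v]; omega, by rw [betw_iff_coords hn0 v]; omega⟩
            (hnc _ hm_vw2)
  -- E' is a triangulation
  have hE'tri : IsTriangulationOn n Finset.univ E' := by
    refine ⟨fun e _ => e.subset_univ, ?_, ?_, ?_⟩
    · intro e he
      rw [hE', Finset.mem_insert] at he
      rcases he with rfl | he
      · exact Finset.card_pair huv.symm
      · exact hT.2.1 _ (Finset.mem_of_mem_erase he)
    · intro e he f hf
      rw [hE', Finset.mem_insert] at he hf
      rcases he with rfl | he <;> rcases hf with rfl | hf
      · exact not_cross_shared (Finset.mem_insert_self v {u}) (Finset.mem_insert_self v {u})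
      · intro hc
        exact (Finset.mem_erase.mp hf).1 (hkey f (Finset.mem_of_mem_erase hf) hc)
      · intro hc
        exact (Finset.mem_erase.mp he).1 (hkey e (Finset.mem_of_mem_erase he) (cross_symm hn0 hc))
      · exact hT.2.2.1 _ (Finset.mem_of_mem_erase he) _ (Finset.mem_of_mem_erase hf)
    · intro g _ hcard hnc
      by_cases hgvu : g = {v, u}
      · rw [hE', hgvu]; exact Finset.mem_insert_self _ _
      have hgT : g ∈ T.edges := by
        apply tri_mem hT hcard
        intro f hfT hcr
        by_cases hfw : f = {w1, w2}
        · exact hgvu (hkey2 g hnc (cross_symm hn0 (hfw ▸ hcr)))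
        · exact hnc f (by
            rw [hE']
            exact Finset.mem_insert_of_mem (Finset.mem_erase.mpr ⟨hfw, hfT⟩)) hcr
      have hgne : g ≠ ({w1, w2} : Finset (Fin n)) := by
        intro h
        refine hnc ({v, u} : Finset (Fin n)) (by rw [hE']; exact Finset.mem_insert_self _ _) ?_
        rw [h]
        exact ⟨w1, w2, u, v, rfl, Finset.pair_comm v u,
          by rw [betw_iff_coords hn0 v]; omega, by rw [betw_iff_coords hn0 v]; omega⟩
      rw [hE']
      exact Finset.mem_insert_of_mem (Finset.mem_erase.mpr ⟨hgne, hgT⟩)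
  refine ⟨⟨E', hE'tri⟩, u, ?_, huv, huT, ?_, ?_⟩
  · -- adjacency in the flip graph
    have hTd : T.edges \ E' = {({w1, w2} : Finset (Fin n))} := by
      ext x
      simp only [hE', Finset.mem_sdiff, Finset.mem_insert, Finset.mem_erase,
        Finset.mem_singleton]
      constructor
      · rintro ⟨hxT, hx2⟩
        push_neg at hx2
        by_contra hne
        exact hx2.2 hne hxT
      · rintro rfl
        refine ⟨h12, ?_⟩
        push_neg
        exact ⟨fun h => hvuw12 h.symm, fun h => absurd rfl h⟩
    have hEd : E' \ T.edges = {({v, u} : Finset (Fin n))} := by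
      ext x
      simp only [hE', Finset.mem_sdiff, Finset.mem_insert, Finset.mem_erase,
        Finset.mem_singleton]
      constructor
      · rintro ⟨hx1, hx2⟩
        rcases hx1 with rfl | hx1
        · rfl
        · exact absurd hx1.2 hx2
      · rintro rfl
        exact ⟨Or.inl rfl, huT⟩
    refine (show _ ∧ _ ∧ _ from ⟨?_, ?_, ?_⟩)
    · intro h
      apply huT
      have : T.edges = E' := congrArg Triangulation.edges h
      rw [this, hE']
      exact Finset.mem_insert_self _ _
    · show (T.edges \ E').card = 1
      rw [hTd]; exact Finset.card_singleton _
    · show (E' \ T.edges).card = 1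
      rw [hEd]; exact Finset.card_singleton _
  · show ({v, u} : Finset (Fin n)) ∈ E'
    rw [hE']; exact Finset.mem_insert_self _ _
  · intro w hwu
    constructor
    · intro h
      simp only [hE', Finset.mem_insert] at h
      rcases h with h | h
      · exfalso
        have hx : u ∈ ({v, w} : Finset (Fin n)) := by rw [h]; simp
        rw [mem_pair] at hx
        rcases hx with hx | hx
        · exact huv hx
        · exact hwu hx.symm
      · exact (Finset.mem_erase.mp h).2
    · intro h
      simp only [hE', Finset.mem_insert]
      right
      rw [Finset.mem_erase]
      refine ⟨?_, h⟩
      intro hh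
      have hx : v ∈ ({w1, w2} : Finset (Fin n)) := by rw [← hh]; simp
      rw [mem_pair] at hx
      rcases hx with hx | hx
      · exact hvne1 hx
      · exact hvne2 hx

noncomputable def fanT (n : ℕ) (hn : 3 ≤ n) (v : Fin n) : Triangulation n :=
  ⟨fanE n v, fan_isTri hn v⟩

lemma walk_to_fan {n : ℕ} (hn : 3 ≤ n) (v : Fin n) :
    ∀ (k : ℕ) (X : Triangulation n),
      (Finset.univ.filter fun w => w ≠ v ∧ ({v, w} : Finset (Fin n)) ∉ X.edges).card = k →
      ∃ p : (flipGraph n).Walk X (fanT n hn v), p.length ≤ k := by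
  intro k
  induction k with
  | zero =>
    intro X hX
    have hall : ∀ w : Fin n, w ≠ v → ({v, w} : Finset (Fin n)) ∈ X.edges := by
      intro w hw
      by_contra hc
      have hmem : w ∈ Finset.univ.filter
          fun w => w ≠ v ∧ ({v, w} : Finset (Fin n)) ∉ X.edges :=
        Finset.mem_filter.mpr ⟨Finset.mem_univ _, hw, hc⟩
      rw [Finset.card_eq_zero.mp hX] at hmem
      exact absurd hmem (Finset.notMem_empty w)
    have hsub : ∀ e ∈ fanE n v, e ∈ X.edges := by
      intro e he
      rw [mem_fanE] at he
      obtain ⟨hc2, hor⟩ := he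
      rcases hor with hv | hbd
      · obtain ⟨w, hwv, rfl⟩ := pair_of_mem_card_two hc2 hv
        exact hall w hwv
      · exact boundary_mem (by omega) X.isTri hbd
    have hXfan : X.edges = fanE n v := by
      apply Finset.Subset.antisymm
      · intro e he
        exact (fan_isTri hn v).2.2.2 e (Finset.subset_univ e) (X.isTri.2.1 e he)
          (fun f hf => X.isTri.2.2.1 e he f (hsub f hf))
      · exact fun e he => hsub e he
    have hX : X = fanT n hn v := Triangulation.edges_injective n hXfan
    subst hX
    exact ⟨SimpleGraph.Walk.nil, by simp⟩
  | succ k ih =>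
    intro X hX
    have hne : (Finset.univ.filter
        fun w => w ≠ v ∧ ({v, w} : Finset (Fin n)) ∉ X.edges).Nonempty := by
      rw [← Finset.card_pos, hX]; omega
    obtain ⟨w0, hw0mem⟩ := hne
    rw [Finset.mem_filter] at hw0mem
    obtain ⟨-, hw0v, hw0⟩ := hw0mem
    obtain ⟨T', u, hadj, huv, huT, huT', hiff⟩ := flip_step hn X v w0 hw0v hw0
    have hcard' : (Finset.univ.filter
        fun w => w ≠ v ∧ ({v, w} : Finset (Fin n)) ∉ T'.edges).card = k := by
      have hseteq : (Finset.univ.filter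
          fun w => w ≠ v ∧ ({v, w} : Finset (Fin n)) ∉ T'.edges) =
          (Finset.univ.filter
            fun w => w ≠ v ∧ ({v, w} : Finset (Fin n)) ∉ X.edges).erase u := by
        ext w
        rw [Finset.mem_erase, Finset.mem_filter, Finset.mem_filter]
        constructor
        · rintro ⟨-, hwv, hw⟩
          have hwu : w ≠ u := fun h => hw (h ▸ huT')
          exact ⟨hwu, Finset.mem_univ _, hwv, fun hc => hw ((hiff w hwu).mpr hc)⟩
        · rintro ⟨hwu, -, hwv, hw⟩
          exact ⟨Finset.mem_univ _, hwv, fun hc => hw ((hiff w hwu).mp hc)⟩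
      rw [hseteq, Finset.card_erase_of_mem
        (Finset.mem_filter.mpr ⟨Finset.mem_univ _, huv, huT⟩), hX]
      omega
    obtain ⟨p, hp⟩ := ih T' hcard'
    refine ⟨SimpleGraph.Walk.cons hadj p, ?_⟩
    rw [SimpleGraph.Walk.length_cons]
    omega

lemma count_nonnbrs {n : ℕ} (hn : 3 ≤ n) (X : Triangulation n) (v : Fin n) :
    (Finset.univ.filter fun w => w ≠ v ∧ ({v, w} : Finset (Fin n)) ∉ X.edges).card + 3
      + interiorDeg n X v = n := by
  classical
  haveI : NeZero n := ⟨by omega⟩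
  have hn0 : 0 < n := by omega
  have hn2 : 2 ≤ n := by omega
  have hT := X.isTri
  have hV := coord_zero v
  have hp1c : ((v + 1) - v).val = 1 := succ_sub_val hn2 v
  have hm1c : ((v - 1) - v).val = n - 1 := by
    have h1 : (v - 1) + 1 = v := by abel
    have h2 := succ_sub_val hn2 (v - 1)
    rw [h1] at h2
    have h3 := coord_lt v (v - 1)
    have h4 : (v - 1) ≠ v := by
      intro h
      rw [h, coord_zero] at h2; omega
    have h5 := coord_ne hn0 h4 (o := v)
    rw [hV] at h5
    rw [cd_sub hn0 v v (v - 1), hV] at h2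
    unfold cd at h2
    split_ifs at h2 <;> omega
  have hbd1 : IsBoundary n ({v, v + 1} : Finset (Fin n)) := by
    rw [boundary_iff]; exact ⟨v, rfl⟩
  have hbdm : IsBoundary n ({v, v - 1} : Finset (Fin n)) := by
    rw [boundary_iff]
    exact ⟨v - 1, by rw [show (v - 1) + 1 = v by abel]; exact Finset.pair_comm v (v - 1)⟩
  set W : Finset (Fin n) := Finset.univ.filter
    (fun w => ({v, w} : Finset (Fin n)) ∈ X.edges ∧
      ¬ IsBoundary n ({v, w} : Finset (Fin n))) with hW
  have hWcard : W.card = interiorDeg n X v := by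
    unfold interiorDeg
    apply Finset.card_bij (fun w _ => ({v, w} : Finset (Fin n)))
    · intro w hw
      rw [hW, Finset.mem_filter] at hw
      exact Finset.mem_filter.mpr ⟨hw.2.1, Finset.mem_insert_self _ _, hw.2.2⟩
    · intro w1 hw1 w2 hw2 heq
      rw [hW, Finset.mem_filter] at hw1 hw2
      have h1 : w1 ∈ ({v, w2} : Finset (Fin n)) := by rw [← heq]; simp
      rw [mem_pair] at h1
      rcases h1 with h1 | h1
      · exact absurd h1.symm (ne_of_pair_mem_tri hT hw1.2.1)
      · exact h1
    · intro e he
      rw [Finset.mem_filter] at he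
      obtain ⟨heX, hve, hnbd⟩ := he
      obtain ⟨w, hwv, rfl⟩ := pair_of_mem_card_two (hT.2.1 e heX) hve
      exact ⟨w, Finset.mem_filter.mpr ⟨Finset.mem_univ _, heX, hnbd⟩, rfl⟩
  have hvp1 : v ≠ v + 1 := by
    intro h; rw [← h, hV] at hp1c; omega
  have hvm1 : v ≠ v - 1 := by
    intro h; rw [← h, hV] at hm1c; omega
  have hp1m1 : v + 1 ≠ v - 1 := by
    intro h; rw [h, hm1c] at hp1c; omega
  have hcompl : Finset.univ.filter
      (fun w => ¬(w ≠ v ∧ ({v, w} : Finset (Fin n)) ∉ X.edges)) =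
      insert v (insert (v + 1) (insert (v - 1) W)) := by
    ext w
    simp only [Finset.mem_filter, Finset.mem_univ, true_and, Finset.mem_insert]
    constructor
    · intro h
      push_neg at h
      by_cases hwv : w = v
      · exact Or.inl hwv
      have hvw : ({v, w} : Finset (Fin n)) ∈ X.edges := h hwv
      by_cases hbd : IsBoundary n ({v, w} : Finset (Fin n))
      · rw [boundary_iff] at hbd
        obtain ⟨i, hi⟩ := hbd
        rcases pair_eq_cases hi (ne_of_pair_mem_tri hT hvw) with ⟨hv1, hw1⟩ | ⟨hv1, hw1⟩
        · right; left; rw [hw1, ← hv1]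
        · right; right; left; rw [hw1, hv1]; abel
      · right; right; right
        exact Finset.mem_filter.mpr ⟨Finset.mem_univ _, hvw, hbd⟩
    · intro h
      push_neg
      intro hwv
      rcases h with rfl | rfl | rfl | hw
      · exact absurd rfl hwv
      · exact boundary_mem hn2 hT hbd1
      · exact boundary_mem hn2 hT hbdm
      · exact (Finset.mem_filter.mp hw).2.1
  have h3 : v - 1 ∉ W := by
    intro h; exact (Finset.mem_filter.mp h).2.2 hbdm
  have h2 : v + 1 ∉ insert (v - 1) W := by
    rw [Finset.mem_insert]
    rintro (h | h)
    · exact hp1m1 h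
    · exact (Finset.mem_filter.mp h).2.2 hbd1
  have h1 : v ∉ insert (v + 1) (insert (v - 1) W) := by
    rw [Finset.mem_insert, Finset.mem_insert]
    rintro (h | h | h)
    · exact hvp1 h
    · exact hvm1 h
    · exact (ne_of_pair_mem_tri hT (Finset.mem_filter.mp h).2.1) rfl
  have hccard : (insert v (insert (v + 1) (insert (v - 1) W))).card = W.card + 3 := by
    rw [Finset.card_insert_of_notMem h1, Finset.card_insert_of_notMem h2,
      Finset.card_insert_of_notMem h3]
  have hsplit := Finset.card_filter_add_card_filter_not
    (s := (Finset.univ : Finset (Fin n)))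
    (p := fun w => w ≠ v ∧ ({v, w} : Finset (Fin n)) ∉ X.edges)
  rw [hcompl, hccard, Finset.card_univ, Fintype.card_fin] at hsplit
  omega

/-- If some vertex of the polygon is incident to exactly `e` interior
edges of `T`, then `d(T,U) ≤ 2n - 6 - e` for every triangulation `U`. -/
theorem stmt0 (n : ℕ) (hn : 3 ≤ n) (T : Triangulation n) (v : Fin n) (e : ℕ)
    (he : interiorDeg n T v = e) (U : Triangulation n) :
    (((flipGraph n).dist T U : ℤ)) ≤ 2 * (n : ℤ) - 6 - (e : ℤ) := by
  classical
  obtain ⟨p, hp⟩ := walk_to_fan hn v _ T rfl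
  obtain ⟨q, hq⟩ := walk_to_fan hn v _ U rfl
  have hd := SimpleGraph.dist_le (p.append q.reverse)
  rw [SimpleGraph.Walk.length_append, SimpleGraph.Walk.length_reverse] at hd
  have hcT := count_nonnbrs hn T v
  have hcU := count_nonnbrs hn U v
  rw [he] at hcT
  omega
end

section
/- Let T and U be triangulations of a convex polygon π with at least four vertices and let (a,b) be a clockwise-oriented boundary edge of π. If some geodesic between T and U in the flip-graph of π contains exactly f flips incident to {a,b}, then d(T,U) ≥ d(T∖a, U∖a) + f. -/
lemma subval' {m : ℕ} (u v : Fin (m+1)) :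
    (u - v).val = if v.val ≤ u.val then u.val - v.val else u.val + (m+1) - v.val := by
  rcases u with ⟨u,hu⟩; rcases v with ⟨v,hv⟩
  rw [Fin.sub_def]; dsimp
  rcases le_or_gt v u with h|h
  · rw [if_pos h]
    have h2 : m + 1 - v + u = (u - v) + (m+1) := by omega
    rw [h2, Nat.add_mod_right, Nat.mod_eq_of_lt (by omega)]
  · rw [if_neg (by omega), Nat.mod_eq_of_lt (by omega)]; omega

def cyc (p q r : ℕ) : Prop := (p<q∧q<r)∨(q<r∧r<p)∨(r<p∧p<q)

lemma between_delta (m : ℕ) (c x y z : Fin (m+1)) :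
    Between (m+1) x y z ↔ cyc ((x-c).val) ((y-c).val) ((z-c).val) := by
  unfold Between cyc
  rw [show y - x = (y-c) - (x-c) from (sub_sub_sub_cancel_right y x c).symm,
      show z - x = (z-c) - (x-c) from (sub_sub_sub_cancel_right z x c).symm,
      subval' (y-c) (x-c), subval' (z-c) (x-c)]
  have h1 := (x-c).isLt; have h2 := (y-c).isLt; have h3 := (z-c).isLt
  split_ifs <;> omega

lemma pair_eq {α : Type*} [DecidableEq α] {x y p q : α} (h : ({x,y}:Finset α) = {p,q}) :
    (x=p∧y=q)∨(x=q∧y=p) := by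
  have hx : x = p ∨ x = q := by
    have : x ∈ ({p,q}:Finset α) := h ▸ (by simp)
    simpa using this
  have hy : y = p ∨ y = q := by
    have : y ∈ ({p,q}:Finset α) := h ▸ (by simp)
    simpa using this
  have hq : q = x ∨ q = y := by
    have : q ∈ ({x,y}:Finset α) := h ▸ (by simp)
    simpa using this
  have hp : p = x ∨ p = y := by
    have : p ∈ ({x,y}:Finset α) := h ▸ (by simp)
    simpa using this
  rcases hx with rfl|rfl <;> rcases hy with rfl|rfl <;> tauto

lemma cross_pair (m : ℕ) (x y u v : Fin m) :
    Cross m {x,y} {u,v} ↔ (Between m x u y ∧ Between m y v x) ∨ (Between m x v y ∧ Between m y u x) := by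
  constructor
  · rintro ⟨p,q,r,s,he,hf,h1,h2⟩
    rcases pair_eq he with ⟨rfl,rfl⟩|⟨rfl,rfl⟩ <;> rcases pair_eq hf with ⟨rfl,rfl⟩|⟨rfl,rfl⟩ <;> tauto
  · rintro (⟨h1,h2⟩|⟨h1,h2⟩)
    · exact ⟨x,y,u,v,rfl,rfl,h1,h2⟩
    · exact ⟨x,y,v,u,rfl,Finset.pair_comm u v,h1,h2⟩

lemma cross_delta (m : ℕ) (c x y u v : Fin (m+1)) :
    Cross (m+1) {x,y} {u,v} ↔
      (cyc ((x-c).val) ((u-c).val) ((y-c).val) ∧ cyc ((y-c).val) ((v-c).val) ((x-c).val)) ∨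
      (cyc ((x-c).val) ((v-c).val) ((y-c).val) ∧ cyc ((y-c).val) ((u-c).val) ((x-c).val)) := by
  rw [cross_pair, between_delta m c, between_delta m c, between_delta m c, between_delta m c]

lemma delta_pos {m : ℕ} {c : Fin (m+1)} (x : Fin (m+1)) (hx : x ≠ c) : 0 < (x - c).val := by
  rcases Nat.eq_zero_or_pos (x-c).val with h|h
  · exact absurd (sub_eq_zero.mp (Fin.ext (by simpa using h))) hx
  · exact h

lemma delta_inj {m : ℕ} (c : Fin (m+1)) {x y : Fin (m+1)} (h : (x - c).val = (y - c).val) : x = y :=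
  sub_left_inj.mp (Fin.ext h)

section
variable {n : ℕ} (a : Fin (n+2))

lemma b_ne_a : a + 1 ≠ a := by
  intro h
  have : (a+1) - a = a - a := by rw [h]
  rw [add_sub_cancel_left, sub_self] at this
  exact one_ne_zero this

lemma delta_b : ((a+1) - a).val = 1 := by rw [add_sub_cancel_left]; simp

lemma delta_self : ((a:Fin (n+2)) - a).val = 0 := by rw [sub_self]; rfl

lemma delta_ne_one {x : Fin (n+2)} (hx : x ≠ a + 1) : (x - a).val ≠ 1 := fun h1 =>
  hx (delta_inj a (by rw [h1, delta_b]))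

-- generic distinctness & symmetry of Cross
lemma cross_ne {m : ℕ} {x y u v : Fin (m+1)} (h : Cross (m+1) {x,y} {u,v}) :
    x ≠ u ∧ x ≠ v ∧ y ≠ u ∧ y ≠ v := by
  have h' := (cross_delta m x x y u v).mp h
  have e0 : (x - x).val = 0 := by rw [sub_self]; rfl
  rw [e0] at h'
  have key : (u-x).val ≠ 0 ∧ (v-x).val ≠ 0 ∧ (u-x).val ≠ (y-x).val ∧ (v-x).val ≠ (y-x).val := by
    unfold cyc at h'; omega
  refine ⟨fun hh => key.1 ?_, fun hh => key.2.1 ?_, fun hh => key.2.2.1 ?_, fun hh => key.2.2.2 ?_⟩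
  · rw [← hh, e0]
  · rw [← hh, e0]
  · exact congrArg (fun z => (z - x).val) hh.symm
  · exact congrArg (fun z => (z - x).val) hh.symm

lemma cross_symm_s1 {m : ℕ} {x y u v : Fin (m+1)} (h : Cross (m+1) {x,y} {u,v}) :
    Cross (m+1) {u,v} {x,y} := by
  have h' := (cross_delta m x x y u v).mp h
  refine (cross_delta m x u v x y).mpr ?_
  unfold cyc at h' ⊢; omega

lemma S_bnd (u v : Fin (n+2)) : ¬ Cross (n+2) {a, a+1} {u,v} := by
  intro h
  have h' := (cross_delta (n+1) a a (a+1) u v).mp h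
  rw [delta_self, delta_b] at h'
  unfold cyc at h'; omega

lemma S2 {y u v : Fin (n+2)} (hy : y ≠ a) (hu : u ≠ a) (hv : v ≠ a)
    (h : Cross (n+2) {a+1, y} {u, v}) : Cross (n+2) {a, y} {u, v} := by
  have h' := (cross_delta (n+1) a (a+1) y u v).mp h
  refine (cross_delta (n+1) a a y u v).mpr ?_
  simp only [delta_self, delta_b] at h' ⊢
  have p1 := delta_pos y hy; have p2 := delta_pos u hu; have p3 := delta_pos v hv
  have b1 := (y-a).isLt; have b2 := (u-a).isLt; have b3 := (v-a).isLt
  unfold cyc at h' ⊢; omega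

lemma S3 {x y d : Fin (n+2)} (hx : x ≠ a) (hx' : x ≠ a+1) (hy : y ≠ a) (hy' : y ≠ a+1)
    (hd : d ≠ a) (hd' : d ≠ a+1) (h : Cross (n+2) {x,y} {a,d}) : Cross (n+2) {x,y} {a+1,d} := by
  have h' := (cross_delta (n+1) a x y a d).mp h
  refine (cross_delta (n+1) a x y (a+1) d).mpr ?_
  simp only [delta_self, delta_b] at h' ⊢
  have p1 := delta_pos x hx; have p2 := delta_pos y hy; have p3 := delta_pos d hd
  have q1 := delta_ne_one a hx'; have q2 := delta_ne_one a hy'; have q3 := delta_ne_one a hd'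
  have b1 := (x-a).isLt; have b2 := (y-a).isLt; have b3 := (d-a).isLt
  unfold cyc at h' ⊢; omega

lemma S4 {y u v : Fin (n+2)} (hy : y ≠ a) (hy' : y ≠ a+1) (hu : u ≠ a) (hu' : u ≠ a+1)
    (hv : v ≠ a) (hv' : v ≠ a+1) (h : Cross (n+2) {a,y} {u,v}) : Cross (n+2) {a+1,y} {u,v} := by
  have h' := (cross_delta (n+1) a a y u v).mp h
  refine (cross_delta (n+1) a (a+1) y u v).mpr ?_
  simp only [delta_self, delta_b] at h' ⊢
  have p1 := delta_pos y hy; have p2 := delta_pos u hu; have p3 := delta_pos v hv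
  have q1 := delta_ne_one a hy'; have q2 := delta_ne_one a hu'; have q3 := delta_ne_one a hv'
  have b1 := (y-a).isLt; have b2 := (u-a).isLt; have b3 := (v-a).isLt
  unfold cyc at h' ⊢; omega

lemma S5 {y d e₂ : Fin (n+2)} (hy : y ≠ a) (hy' : y ≠ a+1) (hd : d ≠ a) (hd' : d ≠ a+1)
    (he : e₂ ≠ a) (he' : e₂ ≠ a+1)
    (h1 : Cross (n+2) {a+1,y} {a,d}) (h2 : Cross (n+2) {a,y} {a+1,e₂}) :
    Cross (n+2) {a,d} {a+1,e₂} := by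
  have h1' := (cross_delta (n+1) a (a+1) y a d).mp h1
  have h2' := (cross_delta (n+1) a a y (a+1) e₂).mp h2
  refine (cross_delta (n+1) a a d (a+1) e₂).mpr ?_
  simp only [delta_self, delta_b] at h1' h2' ⊢
  have p1 := delta_pos y hy; have p2 := delta_pos d hd; have p3 := delta_pos e₂ he
  have q1 := delta_ne_one a hy'; have q2 := delta_ne_one a hd'; have q3 := delta_ne_one a he'
  have b1 := (y-a).isLt; have b2 := (d-a).isLt; have b3 := (e₂-a).isLt
  unfold cyc at h1' h2' ⊢; omega
end

section
variable {n : ℕ} (a : Fin (n+2))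

def phi (v : Fin (n + 2)) : Fin (n + 1) := collapse n a (if v = a then a + 1 else v)

lemma collapse_val (v : Fin (n+2)) :
    (collapse n a v).val = if v.val < a.val then v.val else v.val - 1 := rfl

lemma val_b : (a + 1).val = if a.val = n+1 then 0 else a.val + 1 := by
  have h : (a + 1).val = (a.val + 1) % (n+2) := by
    rw [Fin.add_def]; simp
  rw [h]
  have := a.isLt
  split_ifs with h2
  · rw [h2]; simp
  · rw [Nat.mod_eq_of_lt (by omega)]

lemma phi_b_val : (phi a (a+1)).val = if a.val = n+1 then 0 else a.val := by
  unfold phi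
  rw [if_neg (b_ne_a a), collapse_val, val_b]
  have := a.isLt
  split_ifs <;> omega

lemma phi_norm (x : Fin (n+2)) : phi a x = phi a (if x = a then a + 1 else x) := by
  unfold phi
  split_ifs with h h2
  · exact absurd h2 (b_ne_a a)
  · rfl
  · rfl

lemma phi_a : phi a a = phi a (a+1) := by rw [phi_norm a a, if_pos rfl]

lemma phi_delta (x : Fin (n+2)) (hx : x ≠ a) :
    ((phi a x) - (phi a (a+1))).val + 1 = (x - a).val := by
  have hxv : x.val ≠ a.val := fun h => hx (Fin.ext h)
  have h1 := x.isLt; have h2 := a.isLt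
  rw [subval', subval', phi_b_val]
  unfold phi
  rw [if_neg hx, collapse_val]
  split_ifs <;> omega

lemma phi_inj {x y : Fin (n+2)} (hx : x ≠ a) (hy : y ≠ a) (h : phi a x = phi a y) : x = y := by
  apply delta_inj (m := n+1) a
  have h1 := phi_delta a x hx
  have h2 := phi_delta a y hy
  rw [h] at h1
  omega

def psi (w : Fin (n+1)) : Fin (n+2) :=
  a + ⟨(w - phi a (a+1)).val + 1, by have := (w - phi a (a+1)).isLt; omega⟩

lemma psi_delta (w : Fin (n+1)) : (psi a w - a).val = (w - phi a (a+1)).val + 1 := by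
  unfold psi; rw [add_sub_cancel_left]

lemma psi_ne_a (w : Fin (n+1)) : psi a w ≠ a := by
  intro h
  have h2 := psi_delta a w
  rw [h, sub_self] at h2
  simp at h2

lemma phi_psi (w : Fin (n+1)) : phi a (psi a w) = w := by
  apply delta_inj (m := n) (phi a (a+1)) (x := phi a (psi a w))
  have h1 := phi_delta a (psi a w) (psi_ne_a a w)
  have h2 := psi_delta a w
  omega

lemma psi_b_iff (w : Fin (n+1)) : psi a w = a + 1 ↔ w = phi a (a+1) := by
  constructor
  · intro h
    have h1 := psi_delta a w
    rw [h, delta_b] at h1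
    have h3 : (w - phi a (a+1)).val = ((phi a (a+1)) - phi a (a+1)).val := by
      rw [sub_self]; simpa using h1
    exact delta_inj (m := n) (phi a (a+1)) h3
  · intro h
    apply delta_inj (m := n+1) a
    rw [psi_delta, h, sub_self, delta_b]
    simp

set_option maxHeartbeats 1000000 in
lemma cross_phi {x y u v : Fin (n+2)} (hx : x ≠ a) (hy : y ≠ a) (hu : u ≠ a) (hv : v ≠ a) :
    Cross (n+1) {phi a x, phi a y} {phi a u, phi a v} ↔ Cross (n+2) {x,y} {u,v} := by
  have kx := phi_delta a x hx; have ky := phi_delta a y hy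
  have ku := phi_delta a u hu; have kv := phi_delta a v hv
  have bx := (x-a).isLt; have by' := (y-a).isLt; have bu := (u-a).isLt; have bv := (v-a).isLt
  constructor
  · intro h
    have h' := (cross_delta n (phi a (a+1)) (phi a x) (phi a y) (phi a u) (phi a v)).mp h
    refine (cross_delta (n+1) a x y u v).mpr ?_
    unfold cyc at h' ⊢; omega
  · intro h
    have h' := (cross_delta (n+1) a x y u v).mp h
    refine (cross_delta n (phi a (a+1)) (phi a x) (phi a y) (phi a u) (phi a v)).mpr ?_
    unfold cyc at h' ⊢; omega

end


namespace DelProof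
open Finset

variable {n : ℕ}

lemma pair_ne_of_ne {u v : Fin (n+2)} (a : Fin (n+2)) (hu : u ≠ a) (hv : v ≠ a) :
    ({u,v} : Finset (Fin (n+2))) ≠ {a, a+1} := by
  intro h
  have : a ∈ ({u,v} : Finset (Fin (n+2))) := by rw [h]; simp
  simp only [Finset.mem_insert, Finset.mem_singleton] at this
  rcases this with h'|h'
  · exact hu h'.symm
  · exact hv h'.symm

lemma pair_ac_ne {a c : Fin (n+2)} (hc : c ≠ a + 1) :
    ({a,c} : Finset (Fin (n+2))) ≠ {a, a+1} := by
  intro h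
  rcases pair_eq h with ⟨_, h2⟩|⟨h1, h2⟩
  · exact hc h2
  · exact b_ne_a a h1.symm

lemma pair_bc_ne {a c : Fin (n+2)} (hc : c ≠ a) :
    ({a+1,c} : Finset (Fin (n+2))) ≠ {a, a+1} := by
  intro h
  rcases pair_eq h with ⟨h1, _⟩|⟨_, h2⟩
  · exact b_ne_a a h1
  · exact hc h2

lemma img_pair (a x y : Fin (n+2)) :
    ({x,y} : Finset (Fin (n+2))).image (phi a) = {phi a x, phi a y} := by
  simp [Finset.image_insert]

lemma pair_rep {x y z : Fin (n+2)} (hxy : x ≠ y) (hz : z ∈ ({x,y} : Finset (Fin (n+2)))) :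
    ∃ w, w ≠ z ∧ (w = x ∨ w = y) ∧ ({x,y} : Finset (Fin (n+2))) = {z,w} := by
  simp only [Finset.mem_insert, Finset.mem_singleton] at hz
  rcases hz with rfl|rfl
  · exact ⟨y, hxy.symm, Or.inr rfl, rfl⟩
  · exact ⟨x, hxy, Or.inl rfl, Finset.pair_comm x z⟩

lemma edge_two {E : Finset (Finset (Fin (n+2)))} (hT : IsTriangulationOn (n+2) Finset.univ E)
    {e : Finset (Fin (n+2))} (he : e ∈ E) : ∃ x y, x ≠ y ∧ e = {x,y} :=
  Finset.card_eq_two.mp (hT.2.1 e he)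

lemma edge_cases {E : Finset (Finset (Fin (n+2)))} (a : Fin (n+2))
    (hT : IsTriangulationOn (n+2) Finset.univ E)
    {e : Finset (Fin (n+2))} (he : e ∈ E) :
    (∃ c, c ≠ a ∧ e = {a,c}) ∨ (∃ x y, x ≠ y ∧ x ≠ a ∧ y ≠ a ∧ e = {x,y}) := by
  obtain ⟨x, y, hxy, rfl⟩ := edge_two hT he
  by_cases ha : a ∈ ({x,y} : Finset (Fin (n+2)))
  · obtain ⟨w, hw, _, hrep⟩ := pair_rep hxy ha
    exact Or.inl ⟨w, hw, hrep⟩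
  · simp only [Finset.mem_insert, Finset.mem_singleton] at ha
    push_neg at ha
    exact Or.inr ⟨x, y, hxy, fun h => ha.1 h.symm, fun h => ha.2 h.symm, rfl⟩

lemma deleteEdges_eq (a : Fin (n+2)) (E : Finset (Finset (Fin (n+2)))) :
    deleteEdges n a E = (E.erase {a, a+1}).image (fun e => e.image (phi a)) := rfl

lemma imgmem {E : Finset (Finset (Fin (n+2)))} (a : Fin (n+2)) {f : Finset (Fin (n+2))}
    (hf : f ∈ E) (hne : f ≠ {a, a+1}) : f.image (phi a) ∈ deleteEdges n a E := by
  rw [deleteEdges_eq]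
  exact Finset.mem_image_of_mem _ (Finset.mem_erase.mpr ⟨hne, hf⟩)

lemma img_ad (a d : Fin (n+2)) :
    ({a,d} : Finset (Fin (n+2))).image (phi a) = ({a+1,d} : Finset (Fin (n+2))).image (phi a) := by
  rw [img_pair, img_pair, phi_a]

lemma ab_mem {E : Finset (Finset (Fin (n+2)))} (a : Fin (n+2))
    (hT : IsTriangulationOn (n+2) Finset.univ E) : ({a, a+1} : Finset (Fin (n+2))) ∈ E := by
  apply hT.2.2.2 _ (Finset.subset_univ _) (Finset.card_pair (b_ne_a a).symm)
  intro f hf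
  obtain ⟨x, y, hxy, rfl⟩ := edge_two hT hf
  exact S_bnd a x y

lemma del_card {E : Finset (Finset (Fin (n+2)))} (a : Fin (n+2))
    (hT : IsTriangulationOn (n+2) Finset.univ E) {e : Finset (Fin (n+2))}
    (he : e ∈ E) (hea : e ≠ {a, a+1}) : (e.image (phi a)).card = 2 := by
  rcases edge_cases a hT he with ⟨c, hc, rfl⟩|⟨x, y, hxy, hx, hy, rfl⟩
  · have hc' : c ≠ a + 1 := fun h => hea (by rw [h])
    rw [img_pair, phi_a]
    exact Finset.card_pair (fun h => hc' (phi_inj a (b_ne_a a) hc h).symm)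
  · rw [img_pair]
    exact Finset.card_pair (fun h => hxy (phi_inj a hx hy h))

lemma del_nocross {E : Finset (Finset (Fin (n+2)))} (a : Fin (n+2))
    (hT : IsTriangulationOn (n+2) Finset.univ E) {e f : Finset (Fin (n+2))}
    (he : e ∈ E) (hf : f ∈ E) (hea : e ≠ {a, a+1}) (hfa : f ≠ {a, a+1}) :
    ¬ Cross (n+1) (e.image (phi a)) (f.image (phi a)) := by
  have hnc := hT.2.2.1
  rcases edge_cases a hT he with ⟨c, hc, rfl⟩|⟨x, y, hxy, hx, hy, rfl⟩ <;>
    rcases edge_cases a hT hf with ⟨d, hd, rfl⟩|⟨u, v, huv, hu, hv, rfl⟩ <;>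
    intro hC <;> rw [img_pair, img_pair] at hC
  · rw [phi_a] at hC
    exact (cross_ne (m := n) hC).1 rfl
  · rw [phi_a] at hC
    have h2 := (cross_phi a (b_ne_a a) hc hu hv).mp hC
    have hc' : c ≠ a + 1 := fun h => hea (by rw [h])
    exact hnc _ he _ hf (S2 a hc hu hv h2)
  · rw [phi_a] at hC
    have hC' := cross_symm_s1 (m := n) hC
    have h2 := (cross_phi a (b_ne_a a) hd hx hy).mp hC'
    exact hnc _ hf _ he (S2 a hd hx hy h2)
  · exact hnc _ he _ hf ((cross_phi a hx hy hu hv).mp hC)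

lemma del_max_aux {E : Finset (Finset (Fin (n+2)))} (a : Fin (n+2))
    (hT : IsTriangulationOn (n+2) Finset.univ E) (w₁ w₂ : Fin (n+1)) (hw : w₁ ≠ w₂)
    (hnc : ∀ f ∈ deleteEdges n a E, ¬ Cross (n+1) {w₁,w₂} f)
    (hb2 : psi a w₂ ≠ a + 1) :
    ({w₁,w₂} : Finset (Fin (n+1))) ∈ deleteEdges n a E := by
  set x := psi a w₁ with hxdef
  set y := psi a w₂ with hydef
  have hxa : x ≠ a := psi_ne_a a w₁
  have hya : y ≠ a := psi_ne_a a w₂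
  have hfx : phi a x = w₁ := phi_psi a w₁
  have hfy : phi a y = w₂ := phi_psi a w₂
  have hxy : x ≠ y := fun h => hw (by rw [← hfx, ← hfy, h])
  have key2 : ∀ u v : Fin (n+2), u ≠ a → v ≠ a →
      ({u,v} : Finset (Fin (n+2))).image (phi a) ∈ deleteEdges n a E →
      ¬ Cross (n+2) {x,y} {u,v} := by
    intro u v hu hv hmem hC
    apply hnc _ hmem
    rw [img_pair, ← hfx, ← hfy]
    exact (cross_phi a hxa hya hu hv).mpr hC
  by_cases hbx : x = a + 1
  · -- CASE B
    have done1 : ({a+1, y} : Finset (Fin (n+2))) ∈ E → ({w₁,w₂} : Finset (Fin (n+1))) ∈ deleteEdges n a E := by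
      intro hm
      have h2 := imgmem a hm (pair_bc_ne hya)
      rw [img_pair] at h2
      rw [← hbx, hfx, hfy] at h2
      exact h2
    have done2 : ({a, y} : Finset (Fin (n+2))) ∈ E → ({w₁,w₂} : Finset (Fin (n+1))) ∈ deleteEdges n a E := by
      intro hm
      have h2 := imgmem a hm (pair_ac_ne hb2)
      rw [img_ad, img_pair, ← hbx, hfx, hfy] at h2
      exact h2
    by_contra hfin
    have h1 : ({a+1, y} : Finset (Fin (n+2))) ∉ E := fun hm => hfin (done1 hm)
    have h2 : ({a, y} : Finset (Fin (n+2))) ∉ E := fun hm => hfin (done2 hm)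
    have hyb : y ≠ a + 1 := hb2
    have hg : ∃ g ∈ E, Cross (n+2) {a+1, y} g := by
      by_contra hno
      push_neg at hno
      exact h1 (hT.2.2.2 _ (Finset.subset_univ _) (Finset.card_pair (Ne.symm hyb)) hno)
    obtain ⟨g, hgE, hCg⟩ := hg
    have hgad : ∃ d, d ≠ a ∧ d ≠ a+1 ∧ ({a,d} : Finset (Fin (n+2))) ∈ E ∧
        Cross (n+2) {a+1,y} {a,d} := by
      rcases edge_cases a hT hgE with ⟨d, hd, rfl⟩|⟨u, v, huv, hu, hv, rfl⟩
      · by_cases hdb : d = a + 1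
        · subst hdb
          exact absurd (cross_symm_s1 (m := n+1) hCg) (S_bnd a _ _)
        · exact ⟨d, hd, hdb, hgE, hCg⟩
      · exfalso
        rw [← hbx] at hCg
        exact key2 u v hu hv (imgmem a hgE (pair_ne_of_ne a hu hv)) hCg
    obtain ⟨d, hd, hdb, hgE', hC1⟩ := hgad
    have hh : ∃ h ∈ E, Cross (n+2) {a, y} h := by
      by_contra hno
      push_neg at hno
      exact h2 (hT.2.2.2 _ (Finset.subset_univ _) (Finset.card_pair (Ne.symm hya)) hno)
    obtain ⟨h, hhE, hCh⟩ := hh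
    have hhbe : ∃ e₂, e₂ ≠ a ∧ e₂ ≠ a+1 ∧ ({a+1,e₂} : Finset (Fin (n+2))) ∈ E ∧
        Cross (n+2) {a,y} {a+1,e₂} := by
      rcases edge_cases a hT hhE with ⟨m, hm, rfl⟩|⟨u, v, huv, hu, hv, rfl⟩
      · exact absurd rfl (cross_ne (m := n+1) hCh).1
      · by_cases hbuv : (a+1) ∈ ({u,v} : Finset (Fin (n+2)))
        · obtain ⟨e₂, he₂ne, he₂mem, hrep⟩ := pair_rep huv hbuv
          have he₂a : e₂ ≠ a := by rcases he₂mem with rfl|rfl <;> assumption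
          rw [hrep] at hCh hhE
          exact ⟨e₂, he₂a, he₂ne, hhE, hCh⟩
        · exfalso
          simp only [Finset.mem_insert, Finset.mem_singleton] at hbuv
          push_neg at hbuv
          have hu' : u ≠ a + 1 := fun hh' => hbuv.1 hh'.symm
          have hv' : v ≠ a + 1 := fun hh' => hbuv.2 hh'.symm
          have hC2 := S4 a hya hyb hu hu' hv hv' hCh
          rw [← hbx] at hC2
          exact key2 u v hu hv (imgmem a hhE (pair_ne_of_ne a hu hv)) hC2
    obtain ⟨e₂, he₂a, he₂b, hhE', hC2⟩ := hhbe
    exact hT.2.2.1 _ hgE' _ hhE' (S5 a hya hyb hd hdb he₂a he₂b hC1 hC2)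
  · -- CASE A
    have hyb : y ≠ a + 1 := hb2
    have hcr : ∀ f ∈ E, ¬ Cross (n+2) {x,y} f := by
      intro f hf hC
      rcases edge_cases a hT hf with ⟨d, hd, rfl⟩|⟨u, v, huv, hu, hv, rfl⟩
      · by_cases hdb : d = a + 1
        · subst hdb
          exact S_bnd a x y (cross_symm_s1 (m := n+1) hC)
        · have hC2 := S3 a hxa hbx hya hyb hd hdb hC
          have hmem : ({a+1,d} : Finset (Fin (n+2))).image (phi a) ∈ deleteEdges n a E := by
            rw [← img_ad]
            exact imgmem a hf (pair_ac_ne hdb)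
          exact key2 (a+1) d (b_ne_a a) hd hmem hC2
      · exact key2 u v hu hv (imgmem a hf (pair_ne_of_ne a hu hv)) hC
    have hmemE : ({x,y} : Finset (Fin (n+2))) ∈ E :=
      hT.2.2.2 _ (Finset.subset_univ _) (Finset.card_pair hxy) hcr
    have h2 := imgmem a hmemE (pair_ne_of_ne a hxa hya)
    rw [img_pair, hfx, hfy] at h2
    exact h2

lemma del_max {E : Finset (Finset (Fin (n+2)))} (a : Fin (n+2))
    (hT : IsTriangulationOn (n+2) Finset.univ E) (e' : Finset (Fin (n+1)))
    (hcard : e'.card = 2) (hnc : ∀ f ∈ deleteEdges n a E, ¬ Cross (n+1) e' f) :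
    e' ∈ deleteEdges n a E := by
  obtain ⟨w₁, w₂, hw, rfl⟩ := Finset.card_eq_two.mp hcard
  by_cases hb2 : psi a w₂ = a + 1
  · have hb1 : psi a w₁ ≠ a + 1 := fun h => hw (by rw [← phi_psi a w₁, ← phi_psi a w₂, h, hb2])
    rw [Finset.pair_comm]
    refine del_max_aux a hT w₂ w₁ hw.symm ?_ hb1
    intro f hf hC
    apply hnc f hf
    rw [Finset.pair_comm w₁ w₂]
    exact hC
  · exact del_max_aux a hT w₁ w₂ hw hnc hb2

lemma del_tri {E : Finset (Finset (Fin (n+2)))} (a : Fin (n+2))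
    (hT : IsTriangulationOn (n+2) Finset.univ E) :
    IsTriangulationOn (n+1) Finset.univ (deleteEdges n a E) := by
  refine ⟨fun e _ => Finset.subset_univ e, ?_, ?_, fun e _ => del_max a hT e⟩
  · intro g hg
    rw [deleteEdges_eq] at hg
    obtain ⟨e, he', rfl⟩ := Finset.mem_image.mp hg
    obtain ⟨hne, he⟩ := Finset.mem_erase.mp he'
    exact del_card a hT he hne
  · intro g hg h hh
    rw [deleteEdges_eq] at hg hh
    obtain ⟨e, he', rfl⟩ := Finset.mem_image.mp hg
    obtain ⟨f, hf', rfl⟩ := Finset.mem_image.mp hh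
    obtain ⟨hne, he⟩ := Finset.mem_erase.mp he'
    obtain ⟨hnf, hf⟩ := Finset.mem_erase.mp hf'
    exact del_nocross a hT he hf hne hnf

lemma tri_sub_eq {E F : Finset (Finset (Fin (n+1)))}
    (hE : IsTriangulationOn (n+1) Finset.univ E) (hF : IsTriangulationOn (n+1) Finset.univ F)
    (h : E ⊆ F) : E = F :=
  Finset.Subset.antisymm h (fun f hf =>
    hE.2.2.2 f (Finset.subset_univ _) (hF.2.1 f hf) (fun g hg => hF.2.2.1 f hf g (h hg)))

def delT (a : Fin (n+2)) (X : Triangulation (n+2)) : Triangulation (n+1) :=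
  ⟨deleteEdges n a X.edges, del_tri a X.isTri⟩

lemma del_subset (a : Fin (n+2)) (X Y : Triangulation (n+2)) (e : Finset (Fin (n+2)))
    (hXY : X.edges \ Y.edges = {e}) :
    deleteEdges n a X.edges ⊆ deleteEdges n a Y.edges ∪ {e.image (phi a)} := by
  intro g hg
  rw [deleteEdges_eq] at hg
  obtain ⟨f, hf', rfl⟩ := Finset.mem_image.mp hg
  obtain ⟨hfne, hfX⟩ := Finset.mem_erase.mp hf'
  by_cases hfY : f ∈ Y.edges
  · exact Finset.mem_union_left _ (imgmem a hfY hfne)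
  · have hm : f ∈ X.edges \ Y.edges := Finset.mem_sdiff.mpr ⟨hfX, hfY⟩
    rw [hXY, Finset.mem_singleton] at hm
    subst hm
    exact Finset.mem_union_right _ (Finset.mem_singleton_self _)

lemma adj_del {a : Fin (n+2)} {X Y : Triangulation (n+2)} (h : (flipGraph (n+2)).Adj X Y) :
    delT a X = delT a Y ∨ (flipGraph (n+1)).Adj (delT a X) (delT a Y) := by
  obtain ⟨hne, h1, h2⟩ := h
  obtain ⟨e, he⟩ := Finset.card_eq_one.mp h1
  obtain ⟨f, hf⟩ := Finset.card_eq_one.mp h2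
  have hsX := del_subset a X Y e he
  have hsY := del_subset a Y X f hf
  by_cases heq : deleteEdges n a X.edges = deleteEdges n a Y.edges
  · exact Or.inl (Triangulation.edges_injective _ heq)
  · right
    have hDX : deleteEdges n a X.edges \ deleteEdges n a Y.edges ⊆ {e.image (phi a)} := by
      intro g hg
      obtain ⟨hg1, hg2⟩ := Finset.mem_sdiff.mp hg
      rcases Finset.mem_union.mp (hsX hg1) with hc|hc
      · exact absurd hc hg2
      · exact hc
    have hDY : deleteEdges n a Y.edges \ deleteEdges n a X.edges ⊆ {f.image (phi a)} := by
      intro g hg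
      obtain ⟨hg1, hg2⟩ := Finset.mem_sdiff.mp hg
      rcases Finset.mem_union.mp (hsY hg1) with hc|hc
      · exact absurd hc hg2
      · exact hc
    have hnX : deleteEdges n a X.edges \ deleteEdges n a Y.edges ≠ ∅ := by
      intro h0
      exact heq (tri_sub_eq (del_tri a X.isTri) (del_tri a Y.isTri)
        (Finset.sdiff_eq_empty_iff_subset.mp h0))
    have hnY : deleteEdges n a Y.edges \ deleteEdges n a X.edges ≠ ∅ := by
      intro h0
      exact heq (tri_sub_eq (del_tri a Y.isTri) (del_tri a X.isTri)
        (Finset.sdiff_eq_empty_iff_subset.mp h0)).symm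
    have hcX : (deleteEdges n a X.edges \ deleteEdges n a Y.edges).card = 1 := by
      rcases Finset.subset_singleton_iff.mp hDX with h0|h0
      · exact absurd h0 hnX
      · rw [h0]; exact Finset.card_singleton _
    have hcY : (deleteEdges n a Y.edges \ deleteEdges n a X.edges).card = 1 := by
      rcases Finset.subset_singleton_iff.mp hDY with h0|h0
      · exact absurd h0 hnY
      · rw [h0]; exact Finset.card_singleton _
    exact ⟨fun hc => heq (congrArg Triangulation.edges hc), hcX, hcY⟩

lemma incident_aux {a : Fin (n+2)} {X Y : Triangulation (n+2)} {c : Fin (n+2)}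
    (hadj : (flipGraph (n+2)).Adj X Y) (hap : ApexOf (n+2) X a (a+1) c)
    (hnap : ¬ ApexOf (n+2) Y a (a+1) c) :
    deleteEdges n a X.edges ⊆ deleteEdges n a Y.edges := by
  obtain ⟨hca, hcb, hac, hbc⟩ := hap
  obtain ⟨e, he⟩ := Finset.card_eq_one.mp hadj.2.1
  have hmiss : ({a,c} : Finset (Fin (n+2))) ∉ Y.edges ∨ ({a+1,c} : Finset (Fin (n+2))) ∉ Y.edges := by
    by_contra hno
    push_neg at hno
    exact hnap ⟨hca, hcb, hno.1, hno.2⟩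
  intro g hg
  rw [deleteEdges_eq] at hg
  obtain ⟨f, hf', rfl⟩ := Finset.mem_image.mp hg
  obtain ⟨hfne, hfX⟩ := Finset.mem_erase.mp hf'
  by_cases hfY : f ∈ Y.edges
  · exact imgmem a hfY hfne
  · have hm : f ∈ X.edges \ Y.edges := Finset.mem_sdiff.mpr ⟨hfX, hfY⟩
    rw [he, Finset.mem_singleton] at hm
    subst hm
    rcases hmiss with hmi|hmi
    · -- e = {a,c}
      have hfac : f = {a,c} := by
        have h1 : ({a,c} : Finset (Fin (n+2))) ∈ X.edges \ Y.edges := Finset.mem_sdiff.mpr ⟨hac, hmi⟩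
        rw [he, Finset.mem_singleton] at h1
        exact h1.symm
      have hbcY : ({a+1,c} : Finset (Fin (n+2))) ∈ Y.edges := by
        by_contra hmm
        have h1 : ({a+1,c} : Finset (Fin (n+2))) ∈ X.edges \ Y.edges := Finset.mem_sdiff.mpr ⟨hbc, hmm⟩
        rw [he, Finset.mem_singleton] at h1
        rw [hfac] at h1
        rcases pair_eq h1 with ⟨h2, _⟩|⟨_, h3⟩
        · exact b_ne_a a h2
        · exact hca h3
      rw [hfac, img_ad]
      exact imgmem a hbcY (pair_bc_ne hca)
    · -- e = {a+1,c}
      have hfbc : f = {a+1,c} := by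
        have h1 : ({a+1,c} : Finset (Fin (n+2))) ∈ X.edges \ Y.edges := Finset.mem_sdiff.mpr ⟨hbc, hmi⟩
        rw [he, Finset.mem_singleton] at h1
        exact h1.symm
      have hacY : ({a,c} : Finset (Fin (n+2))) ∈ Y.edges := by
        by_contra hmm
        have h1 : ({a,c} : Finset (Fin (n+2))) ∈ X.edges \ Y.edges := Finset.mem_sdiff.mpr ⟨hac, hmm⟩
        rw [he, Finset.mem_singleton] at h1
        rw [hfbc] at h1
        rcases pair_eq h1 with ⟨h2, _⟩|⟨_, h3⟩
        · exact b_ne_a a h2.symm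
        · exact hcb h3
      rw [hfbc, ← img_ad]
      exact imgmem a hacY (pair_ac_ne hcb)

lemma incident_del {a : Fin (n+2)} {X Y : Triangulation (n+2)}
    (hadj : (flipGraph (n+2)).Adj X Y) (hinc : FlipIncident (n+2) X Y a (a+1)) :
    delT a X = delT a Y := by
  obtain ⟨c, hcase⟩ := hinc
  apply Triangulation.edges_injective
  rcases hcase with ⟨hap, hnap⟩|⟨hap, hnap⟩
  · exact tri_sub_eq (del_tri a X.isTri) (del_tri a Y.isTri) (incident_aux hadj hap hnap)
  · exact (tri_sub_eq (del_tri a Y.isTri) (del_tri a X.isTri) (incident_aux hadj.symm hap hnap)).symm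

open Classical in
lemma flipsIncident_cons {a b : Fin (n+2)} {X Y Z : Triangulation (n+2)}
    (h : (flipGraph (n+2)).Adj X Y) (p : (flipGraph (n+2)).Walk Y Z) :
    flipsIncident (SimpleGraph.Walk.cons h p) a b =
      (if FlipIncident (n+2) X Y a b then 1 else 0) + flipsIncident p a b := by
  unfold flipsIncident
  rw [SimpleGraph.Walk.darts_cons, List.filter_cons]
  by_cases hI : FlipIncident (n+2) X Y a b
  · rw [if_pos hI, if_pos (by simpa using hI : decide (FlipIncident (n+2) X Y a b) = true)]
    simp [Nat.add_comm]
  · simp [hI]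

lemma walk_del (a : Fin (n+2)) {X Y : Triangulation (n+2)} (p : (flipGraph (n+2)).Walk X Y) :
    ∃ q : (flipGraph (n+1)).Walk (delT a X) (delT a Y),
      q.length + flipsIncident p a (a+1) ≤ p.length := by
  induction p with
  | nil => exact ⟨SimpleGraph.Walk.nil, by simp [flipsIncident]⟩
  | @cons u v w h p ih =>
    obtain ⟨q, hq⟩ := ih
    rw [flipsIncident_cons h p, SimpleGraph.Walk.length_cons]
    by_cases hI : FlipIncident (n+2) u v a (a+1)
    · have heq : delT a u = delT a v := incident_del h hI
      refine ⟨q.copy heq.symm rfl, ?_⟩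
      rw [SimpleGraph.Walk.length_copy, if_pos hI]
      omega
    · rw [if_neg hI]
      rcases adj_del (a := a) h with heq|hadj
      · exact ⟨q.copy heq.symm rfl, by rw [SimpleGraph.Walk.length_copy]; omega⟩
      · exact ⟨SimpleGraph.Walk.cons hadj q, by rw [SimpleGraph.Walk.length_cons]; omega⟩

end DelProof

/-- If exactly `f` flips are incident to the clockwise-oriented
boundary edge `(a, a+1)` along a geodesic between `T` and `U`, then
`d(T,U) ≥ d(T∖a, U∖a) + f`. -/
theorem stmt1 (n : ℕ) (hn : 4 ≤ n + 2) (T U : Triangulation (n + 2)) (a : Fin (n + 2))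
    (p : (flipGraph (n + 2)).Walk T U) (hp : p.length = (flipGraph (n + 2)).dist T U)
    (f : ℕ) (hf : flipsIncident p a (a + 1) = f)
    (T' U' : Triangulation (n + 1))
    (hT' : T'.edges = deleteEdges n a T.edges)
    (hU' : U'.edges = deleteEdges n a U.edges) :
    (flipGraph (n + 1)).dist T' U' + f ≤ (flipGraph (n + 2)).dist T U := by
  have hTg : T' = DelProof.delT a T := Triangulation.edges_injective _ hT'
  have hUg : U' = DelProof.delT a U := Triangulation.edges_injective _ hU'
  obtain ⟨q, hq⟩ := DelProof.walk_del a p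
  have hd : (flipGraph (n + 1)).dist T' U' ≤ q.length := by
    rw [hTg, hUg]; exact SimpleGraph.dist_le q
  omega
end

section
/- Let V be a finite totally ordered set. If a subset S of V has cardinality at most (|V| − 3)/2, then there exists x ∈ V∖S and a natural number i such that exactly i elements of S and exactly 2i+1 elements of V are less than x. -/
/-- If a subset `S` of a finite totally ordered set `V` has cardinality
at most `(|V| - 3)/2`, then some `x ∈ V∖S` has exactly `i` elements of `S` and exactly
`2i + 1` elements of `V` less than it. -/
theorem stmt6 {α : Type*} [LinearOrder α] (V S : Finset α) (hS : S ⊆ V)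
    (h : 2 * S.card + 3 ≤ V.card) :
    ∃ x ∈ V, x ∉ S ∧ ∃ i : ℕ,
      (S.filter fun y => y < x).card = i ∧
      (V.filter fun y => y < x).card = 2 * i + 1 := by
  classical
  set m := V.card with hm
  let f : Fin m ≃o {x // x ∈ V} := V.orderIsoOfFin rfl
  let p : ℕ → Prop := fun j => ∃ hj : j < m, ↑(f ⟨j, hj⟩) ∈ S
  let s : ℕ → ℕ := fun k => ((Finset.range k).filter p).card
  have hstep : ∀ k, if p k then s (k+1) = s k + 1 else s (k+1) = s k := by
    intro k
    have : (Finset.range (k+1)).filter p =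
        if p k then insert k ((Finset.range k).filter p) else (Finset.range k).filter p := by
      rw [Finset.range_add_one, Finset.filter_insert]
    split
    · next hp =>
      simp only [s, this, if_pos hp]
      rw [Finset.card_insert_of_notMem (by simp)]
    · next hp =>
      simp only [s, this, if_neg hp]
  -- s m = S.card
  have hsm : s m = S.card := by
    apply Finset.card_bij' (fun j hj => (↑(f ⟨j, Finset.mem_range.1 (Finset.mem_filter.1 hj).1⟩) : α))
      (fun y hy => (f.symm ⟨y, hS hy⟩ : Fin m).val)
    · intro j hj
      simp
    · intro y hy
      simp
    · intro j hj
      obtain ⟨hjr, hp⟩ := Finset.mem_filter.1 hj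
      obtain ⟨hjm, hp⟩ := hp
      convert hp
    · intro y hy
      refine Finset.mem_filter.2 ⟨Finset.mem_range.2 (f.symm ⟨y, hS hy⟩).isLt, ?_⟩
      refine ⟨(f.symm ⟨y, hS hy⟩).isLt, ?_⟩
      simpa using hy
  have hA : ∀ (k : ℕ) (hk : k < m), (V.filter fun y => y < ↑(f ⟨k, hk⟩)).card = k := by
    intro k hk
    conv_rhs => rw [← Finset.card_range k]
    apply Finset.card_bij' (fun y hy => (f.symm ⟨y, (Finset.mem_filter.1 hy).1⟩ : Fin m).val)
      (fun j hj => (↑(f ⟨j, lt_trans (Finset.mem_range.1 hj) hk⟩) : α))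
    · intro y hy; simp
    · intro j hj; simp
    · intro y hy
      obtain ⟨hyV, hylt⟩ := Finset.mem_filter.1 hy
      refine Finset.mem_range.2 ?_
      have : f.symm ⟨y, hyV⟩ < (⟨k, hk⟩ : Fin m) := by
        rw [← f.lt_iff_lt, OrderIso.apply_symm_apply]
        exact Subtype.mk_lt_mk.2 hylt
      exact this
    · intro j hj
      refine Finset.mem_filter.2 ⟨(f ⟨j, _⟩).2, ?_⟩
      have : f ⟨j, lt_trans (Finset.mem_range.1 hj) hk⟩ < f ⟨k, hk⟩ :=
        f.lt_iff_lt.2 (Fin.mk_lt_mk.2 (Finset.mem_range.1 hj))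
      exact this
  have hB : ∀ (k : ℕ) (hk : k < m), (S.filter fun y => y < ↑(f ⟨k, hk⟩)).card = s k := by
    intro k hk
    symm
    apply Finset.card_bij' (fun j hj => (↑(f ⟨j, lt_trans (Finset.mem_range.1 (Finset.mem_filter.1 hj).1) hk⟩) : α))
      (fun y hy => (f.symm ⟨y, hS (Finset.mem_filter.1 hy).1⟩ : Fin m).val)
    · intro j hj; simp
    · intro y hy; simp
    · intro j hj
      obtain ⟨hjr, hjm, hp⟩ := Finset.mem_filter.1 hj
      refine Finset.mem_filter.2 ⟨by convert hp, ?_⟩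
      have : f ⟨j, lt_trans (Finset.mem_range.1 hjr) hk⟩ < f ⟨k, hk⟩ :=
        f.lt_iff_lt.2 (Fin.mk_lt_mk.2 (Finset.mem_range.1 hjr))
      exact this
    · intro y hy
      obtain ⟨hyS, hylt⟩ := Finset.mem_filter.1 hy
      have hlt : f.symm ⟨y, hS hyS⟩ < (⟨k, hk⟩ : Fin m) := by
        rw [← f.lt_iff_lt, OrderIso.apply_symm_apply]
        exact Subtype.mk_lt_mk.2 hylt
      refine Finset.mem_filter.2 ⟨Finset.mem_range.2 hlt, (f.symm ⟨y, hS hyS⟩).isLt, ?_⟩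
      simpa using hyS
  -- the walk function
  let g : ℕ → ℤ := fun k => (k : ℤ) - 2 * s k
  have hg0 : g 0 = 0 := by simp [g, s]
  have hgm : 3 ≤ g m := by
    have : (2 : ℤ) * S.card + 3 ≤ m := by exact_mod_cast h
    simp only [g, hsm]
    omega
  have hmpos : 0 < m := by omega
  set P : ℕ → Prop := fun j => j < m ∧ g j ≤ 1 with hP
  have hP0 : P 0 := ⟨hmpos, by rw [hg0]; norm_num⟩
  set k := Nat.findGreatest P m with hk
  have hkP : P k := Nat.findGreatest_spec (Nat.zero_le m) hP0
  obtain ⟨hkm, hgk⟩ := hkP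
  have hnext : 2 ≤ g (k + 1) := by
    rcases eq_or_lt_of_le (Nat.succ_le_of_lt hkm) with heq | hlt
    · have heq' : k + 1 = m := heq
      rw [heq']; omega
    · have hgr := Nat.findGreatest_is_greatest (Nat.lt_succ_self k) (by omega : k + 1 ≤ m)
      rw [hP] at hgr
      simp only [Nat.succ_eq_add_one, not_and, not_le] at hgr
      have := hgr (by omega)
      omega
  by_cases hpk : p k
  · have := hstep k
    rw [if_pos hpk] at this
    have : g (k + 1) = g k - 1 := by simp [g, this]; push_cast; ring
    omega
  · have hs : s (k + 1) = s k := by have := hstep k; rwa [if_neg hpk] at this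
    have hg1 : g (k + 1) = g k + 1 := by simp [g, hs]; push_cast; ring
    have hgk1 : g k = 1 := by omega
    have hks : (k : ℤ) = 2 * s k + 1 := by simp only [g] at hgk1; omega
    have hksn : k = 2 * s k + 1 := by exact_mod_cast hks
    refine ⟨↑(f ⟨k, hkm⟩), (f ⟨k, hkm⟩).2, ?_, s k, hB k hkm, by rw [hA k hkm]; exact hksn⟩
    intro hmem
    exact hpk ⟨hkm, hmem⟩
end
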